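/- arXiv:2007.09501 — 8 statements merged into one kernel-verified Lean document; each statement's English description precedes it below -/
import Mathlib

section
/- Let D = (I_r | M) be a standard representative matrix and D̂ = (−M^T | I_{n−r}). Then the integer row space of the full matrix 𝐃 = (D ; D̂) equals the direct sum im_Z(D^T) ⊕ ker_Z(D); in particular im_Z(D^T) ∩ ker_Z(D) = {0}. -/
open Matrix MeasureTheory
open scoped ENNReal

noncomputable section

/-- The standard representative matrix `D = (I_r | M)`. -/
def Dmat {r m : ℕ} (M : Matrix (Fin r) (Fin m) ℤ) : Matrix (Fin r) (Fin r ⊕ Fin m) ℤ :=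
  Matrix.fromCols 1 M

/-- The dual matrix `D̂ = (-Mᵀ | I_{n-r})`. -/
def Dhat {r m : ℕ} (M : Matrix (Fin r) (Fin m) ℤ) : Matrix (Fin m) (Fin r ⊕ Fin m) ℤ :=
  Matrix.fromCols (-Mᵀ) 1

/-- The full matrix `𝐃 = (I_r, M ; -Mᵀ, I_{n-r})`. -/
def Dfull {r m : ℕ} (M : Matrix (Fin r) (Fin m) ℤ) :
    Matrix (Fin r ⊕ Fin m) (Fin r ⊕ Fin m) ℤ :=
  Matrix.fromBlocks 1 M (-Mᵀ) 1

/-- Column `j` of `D`, as a real vector. -/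
def colD {r m : ℕ} (M : Matrix (Fin r) (Fin m) ℤ) (j : Fin r ⊕ Fin m) : Fin r → ℝ :=
  fun a => (Dmat M a j : ℝ)

/-- Column `j` of `D̂`, as a real vector. -/
def colDhat {r m : ℕ} (M : Matrix (Fin r) (Fin m) ℤ) (j : Fin r ⊕ Fin m) : Fin m → ℝ :=
  fun a => (Dhat M a j : ℝ)

/-- An order-respecting enumeration of the columns in `B` (via `finSumFinEquiv`). -/
def colEnum {r m : ℕ} (B : Finset (Fin r ⊕ Fin m))
    (h : (B.image finSumFinEquiv).card = r) : Fin r → Fin r ⊕ Fin m :=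
  fun i => finSumFinEquiv.symm ((B.image finSumFinEquiv).orderIsoOfFin h i)

/-- The multiplicity `m(B) = |det (D|_B)|` of an `r`-subset of columns. -/
def mult {r m : ℕ} (M : Matrix (Fin r) (Fin m) ℤ) (B : Finset (Fin r ⊕ Fin m)) : ℕ :=
  if h : (B.image finSumFinEquiv).card = r then
    ((Dmat M).submatrix id (colEnum B h)).det.natAbs
  else 0

/-- `B` is a basis of `D`: an `r`-subset of columns with nonzero determinant. -/
def IsBasis {r m : ℕ} (M : Matrix (Fin r) (Fin m) ℤ) (B : Finset (Fin r ⊕ Fin m)) : Prop :=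
  B.card = r ∧ mult M B ≠ 0

/-- Closed fundamental parallelepiped of the vectors `v i`, `i ∈ S`. -/
def PPc {ι κ : Type*} (v : ι → κ → ℝ) (S : Finset ι) : Set (κ → ℝ) :=
  {x | ∃ a : ι → ℝ, (∀ i ∈ S, 0 ≤ a i ∧ a i ≤ 1) ∧ x = ∑ i ∈ S, a i • v i}

/-- Open fundamental parallelepiped of the vectors `v i`, `i ∈ S`. -/
def PPo {ι κ : Type*} (v : ι → κ → ℝ) (S : Finset ι) : Set (κ → ℝ) :=
  {x | ∃ a : ι → ℝ, (∀ i ∈ S, 0 < a i ∧ a i < 1) ∧ x = ∑ i ∈ S, a i • v i}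

/-- The closed parallelepiped `P(B) = P₁(B) × P₂(B) ⊆ ℝⁿ`. -/
def Pclosed {r m : ℕ} (M : Matrix (Fin r) (Fin m) ℤ) (B : Finset (Fin r ⊕ Fin m)) :
    Set ((Fin r ⊕ Fin m) → ℝ) :=
  {x | (x ∘ Sum.inl) ∈ PPc (colD M) B ∧ (x ∘ Sum.inr) ∈ PPc (colDhat M) Bᶜ}

/-- The open parallelepiped `P(B)° = P₁(B)° × P₂(B)°`. -/
def Popen {r m : ℕ} (M : Matrix (Fin r) (Fin m) ℤ) (B : Finset (Fin r ⊕ Fin m)) :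
    Set ((Fin r ⊕ Fin m) → ℝ) :=
  {x | (x ∘ Sum.inl) ∈ PPo (colD M) B ∧ (x ∘ Sum.inr) ∈ PPo (colDhat M) Bᶜ}

/-- The tile `T(D) = ⋃_{B basis} P(B)`. -/
def Tile {r m : ℕ} (M : Matrix (Fin r) (Fin m) ℤ) : Set ((Fin r ⊕ Fin m) → ℝ) :=
  ⋃ B ∈ {B : Finset (Fin r ⊕ Fin m) | IsBasis M B}, Pclosed M B

/-- The lattice vector `𝐃ᵀ z ∈ ℝⁿ` for `z ∈ ℤⁿ`. -/
def latVec {r m : ℕ} (M : Matrix (Fin r) (Fin m) ℤ) (z : (Fin r ⊕ Fin m) → ℤ) :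
    (Fin r ⊕ Fin m) → ℝ :=
  fun j => ((Matrix.vecMul z (Dfull M)) j : ℝ)

/-- The integer lattice `im_ℤ(𝐃ᵀ)` spanned by the rows of `𝐃`. -/
def LatZ {r m : ℕ} (M : Matrix (Fin r) (Fin m) ℤ) : Submodule ℤ ((Fin r ⊕ Fin m) → ℤ) :=
  Submodule.span ℤ (Set.range fun i => Dfull M i)

/-- `w` is a shifting vector: it does not lie in the span of any facet of `P(B)`
for any basis `B` (split form: neither its first `r` coordinates lie in the span of a
facet of `P₁(B)` nor its last `n-r` coordinates in the span of a facet of `P₂(B)`). -/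
def IsShifting {r m : ℕ} (M : Matrix (Fin r) (Fin m) ℤ) (w : (Fin r ⊕ Fin m) → ℝ) : Prop :=
  ∀ B : Finset (Fin r ⊕ Fin m), IsBasis M B →
    (∀ j ∈ B, (w ∘ Sum.inl) ∉ Submodule.span ℝ (colD M '' ↑(B.erase j))) ∧
    (∀ j ∈ Bᶜ, (w ∘ Sum.inr) ∉ Submodule.span ℝ (colDhat M '' ↑(Bᶜ.erase j)))

/-- `x` is `w`-associated with `B`: `x + εw ∈ P(B)` for all sufficiently small `ε > 0`. -/
def WAssoc {r m : ℕ} (M : Matrix (Fin r) (Fin m) ℤ) (w : (Fin r ⊕ Fin m) → ℝ)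
    (x : (Fin r ⊕ Fin m) → ℝ) (B : Finset (Fin r ⊕ Fin m)) : Prop :=
  ∃ ε₀ > (0 : ℝ), ∀ ε : ℝ, 0 < ε → ε < ε₀ → x + ε • w ∈ Pclosed M B

end


/-- the integer row space of the full matrix `𝐃` is the (internal direct)
sum of the integer row space of `D` and the integer kernel of `D`; in particular the
two summands intersect trivially. -/
theorem stmt3 {r m : ℕ} (M : Matrix (Fin r) (Fin m) ℤ) :
    Submodule.span ℤ (Set.range fun i => Dfull M i) =
      Submodule.span ℤ (Set.range fun i => Dmat M i) ⊔
        LinearMap.ker (Matrix.mulVecLin (Dmat M)) ∧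
    Submodule.span ℤ (Set.range fun i => Dmat M i) ⊓
        LinearMap.ker (Matrix.mulVecLin (Dmat M)) = ⊥ := by
  have hfull_inl : ∀ a, Dfull M (Sum.inl a) = Dmat M a := by
    intro a; funext j; cases j <;>
      simp [Dfull, Dmat, Matrix.fromBlocks, Matrix.fromCols]
  have hker : ∀ b, Dfull M (Sum.inr b) ∈ LinearMap.ker (Matrix.mulVecLin (Dmat M)) := by
    intro b
    simp only [LinearMap.mem_ker, Matrix.mulVecLin_apply]
    funext a
    simp [Matrix.mulVec, dotProduct, Dmat, Dfull, Matrix.fromBlocks,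
      Matrix.fromCols, Fintype.sum_sum_type, Matrix.one_apply, Finset.sum_ite_eq',
      mul_comm]
  constructor
  · apply le_antisymm
    · rw [Submodule.span_le]
      rintro _ ⟨i, rfl⟩
      cases i with
      | inl a =>
        refine Submodule.mem_sup_left ?_
        show Dfull M (Sum.inl a) ∈ _
        rw [hfull_inl a]
        exact Submodule.subset_span ⟨a, rfl⟩
      | inr b => exact Submodule.mem_sup_right (hker b)
    · apply sup_le
      · rw [Submodule.span_le]
        rintro _ ⟨a, rfl⟩
        show Dmat M a ∈ _
        rw [← hfull_inl a]
        exact Submodule.subset_span ⟨Sum.inl a, rfl⟩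
      · intro x hx
        simp only [LinearMap.mem_ker, Matrix.mulVecLin_apply] at hx
        have hx' : ∀ a, x (Sum.inl a) + ∑ b, M a b * x (Sum.inr b) = 0 := by
          intro a
          have := congrFun hx a
          simpa [Matrix.mulVec, dotProduct, Dmat, Matrix.fromCols,
            Fintype.sum_sum_type, Matrix.one_apply, Finset.sum_ite_eq'] using this
        have hrep : x = ∑ b, x (Sum.inr b) • Dfull M (Sum.inr b) := by
          funext j
          cases j with
          | inl a =>
            have := hx' a
            simp only [Finset.sum_apply, Pi.smul_apply, smul_eq_mul, Dfull,
              Matrix.fromBlocks, Matrix.of_apply, Sum.elim_inl, Sum.elim_inr,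
              Matrix.neg_apply, Matrix.transpose_apply]
            have : x (Sum.inl a) = -∑ b, M a b * x (Sum.inr b) := by linarith [hx' a]
            rw [this, ← Finset.sum_neg_distrib]
            exact Finset.sum_congr rfl fun b _ => by ring
          | inr c =>
            simp [Dfull, Matrix.fromBlocks, Matrix.one_apply, Finset.sum_ite_eq',
              Finset.sum_apply, Pi.smul_apply, smul_eq_mul, mul_comm]
        rw [hrep]
        exact Submodule.sum_mem _ fun b _ =>
          Submodule.smul_mem _ _ (Submodule.subset_span ⟨Sum.inr b, rfl⟩)
  · rw [eq_bot_iff]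
    rintro x ⟨hx1, hx2⟩
    replace hx2 : Dmat M *ᵥ x = 0 := hx2
    change x ∈ Submodule.span ℤ (Set.range (Dmat M).row) at hx1
    rw [← range_vecMulLinear] at hx1
    obtain ⟨c, rfl⟩ := hx1
    simp only [Matrix.vecMulLinear_apply] at hx2 ⊢
    have h : (c ᵥ* Dmat M) ⬝ᵥ (c ᵥ* Dmat M) = 0 := by
      rw [← Matrix.dotProduct_mulVec, hx2, dotProduct_zero]
    simpa [Submodule.mem_bot] using dotProduct_self_eq_zero.mp h
end

section
/- (Sandpile matrix-tree theorem) For a standard representative matrix D = (I_r | M), the order of the sandpile group S(D) = Z^n / im_Z(𝐃^T) equals the sum over all bases B of D of m(B)^2, where m(B) is the absolute value of the determinant of the r × r submatrix of D on the columns of B. Equivalently, det(I_r + M M^T) = Σ_{B} det(D|_B)^2, summed over all r-subsets B of columns. -/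
open Matrix MeasureTheory
open scoped ENNReal

section CB
open Matrix Finset Equiv


variable {R : Type*} [CommRing R]

theorem det_mul_expand {r n : ℕ} (A : Matrix (Fin r) (Fin n) R) (B : Matrix (Fin n) (Fin r) R) :
    (A * B).det = ∑ p : Fin r → Fin n, (A.submatrix id p).det * ∏ i, B (p i) i := by
  have h1 : (A * B).det = ∑ p : Fin r → Fin n, ∑ σ : Perm (Fin r),
      (Perm.sign σ : ℤ) • ∏ i, A (σ i) (p i) * B (p i) i := by
    simp only [det_apply', mul_apply, prod_univ_sum, mul_sum, Fintype.piFinset_univ]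
    rw [Finset.sum_comm]
    simp [zsmul_eq_mul]
  rw [h1]
  refine Finset.sum_congr rfl fun p _ => ?_
  rw [det_apply', Finset.sum_mul]
  refine Finset.sum_congr rfl fun σ _ => ?_
  simp only [submatrix_apply, id_eq, zsmul_eq_mul]
  rw [mul_assoc, ← Finset.prod_mul_distrib]

theorem image_orderIsoOfFin {n k : ℕ} (S : Finset (Fin n)) (h : S.card = k) :
    Finset.image (fun i => (S.orderIsoOfFin h i : Fin n)) Finset.univ = S := by
  ext x
  simp only [Finset.mem_image, Finset.mem_univ, true_and]
  constructor
  · rintro ⟨i, rfl⟩; exact (S.orderIsoOfFin h i).2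
  · intro hx; exact ⟨(S.orderIsoOfFin h).symm ⟨x, hx⟩, by simp⟩

theorem enum_injective {n k : ℕ} (S : Finset (Fin n)) (h : S.card = k) :
    Function.Injective (fun i => (S.orderIsoOfFin h i : Fin n)) :=
  fun i j hij => (S.orderIsoOfFin h).injective (Subtype.coe_injective hij)

theorem cauchy_binet {r n : ℕ} (A : Matrix (Fin r) (Fin n) R) (B : Matrix (Fin n) (Fin r) R) :
    (A * B).det = ∑ S ∈ Finset.powersetCard r (Finset.univ : Finset (Fin n)),
      (if h : S.card = r then
        (A.submatrix id (fun i => (S.orderIsoOfFin h i : Fin n))).det *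
        (B.submatrix (fun i => (S.orderIsoOfFin h i : Fin n)) id).det else 0) := by
  classical
  rw [det_mul_expand]
  have h2 : ∑ p : Fin r → Fin n, (A.submatrix id p).det * ∏ i, B (p i) i
      = ∑ p ∈ Finset.univ.filter (fun p : Fin r → Fin n => Function.Injective p),
          (A.submatrix id p).det * ∏ i, B (p i) i := by
    refine (Finset.sum_subset (Finset.filter_subset _ _) fun p _ hp => ?_).symm
    simp only [Finset.mem_filter, Finset.mem_univ, true_and] at hp
    rw [Function.not_injective_iff] at hp
    obtain ⟨i, j, hij, hne⟩ := hp
    rw [Matrix.det_zero_of_column_eq hne (by intro a; simp [hij]), zero_mul]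
  rw [h2]
  set T := (Finset.powersetCard r (Finset.univ : Finset (Fin n))).sigma
      (fun _ => (Finset.univ : Finset (Perm (Fin r)))) with hT
  set g : (Σ _ : Finset (Fin n), Perm (Fin r)) → R := fun x =>
    if h : x.1.card = r then
      (A.submatrix id ((fun i => (x.1.orderIsoOfFin h i : Fin n)) ∘ x.2)).det *
        ∏ i, B (x.1.orderIsoOfFin h (x.2 i) : Fin n) i
    else 0 with hg
  have himg : ∀ (S : Finset (Fin n)) (h : S.card = r) (σ : Perm (Fin r)),
      Finset.image ((fun i => (S.orderIsoOfFin h i : Fin n)) ∘ σ) Finset.univ = S := by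
    intro S h σ
    rw [← Finset.image_image, Finset.image_univ_equiv, image_orderIsoOfFin]
  have hbij : ∑ x ∈ T, g x
      = ∑ p ∈ Finset.univ.filter (fun p : Fin r → Fin n => Function.Injective p),
          (A.submatrix id p).det * ∏ i, B (p i) i := by
    refine Finset.sum_bij (fun x hx => (fun i => (x.1.orderIsoOfFin
        (Finset.mem_powersetCard.mp (Finset.mem_sigma.mp hx).1).2 i : Fin n)) ∘ x.2)
      ?_ ?_ ?_ ?_
    · intro x hx
      simp only [Finset.mem_filter, Finset.mem_univ, true_and]
      exact (enum_injective _ _).comp x.2.injective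
    · intro x hx y hy he
      have hcx := (Finset.mem_powersetCard.mp (Finset.mem_sigma.mp hx).1).2
      have hcy := (Finset.mem_powersetCard.mp (Finset.mem_sigma.mp hy).1).2
      obtain ⟨Sx, σx⟩ := x
      obtain ⟨Sy, σy⟩ := y
      have hS : Sx = Sy := by
        have h1 := congrArg (fun p => Finset.image p Finset.univ) he
        simpa only [himg _ hcx, himg _ hcy] using h1
      subst hS
      simp only [Sigma.mk.inj_iff, heq_eq_eq, true_and]
      exact Equiv.coe_fn_injective (funext fun i => enum_injective Sx hcx (congrFun he i))
    · intro p hp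
      simp only [Finset.mem_filter, Finset.mem_univ, true_and] at hp
      set S := Finset.image p Finset.univ with hSdef
      have hS : S.card = r := by
        rw [hSdef, Finset.card_image_of_injective _ hp, Finset.card_univ, Fintype.card_fin]
      have hmem : S ∈ Finset.powersetCard r (Finset.univ : Finset (Fin n)) :=
        Finset.mem_powersetCard.mpr ⟨Finset.subset_univ _, hS⟩
      set p' : Fin r → {a // a ∈ S} := fun i => ⟨p i, Finset.mem_image_of_mem p (Finset.mem_univ i)⟩
        with hp'def
      have hp' : Function.Injective p' := fun i j h => hp (congrArg Subtype.val h)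
      have hbij' : Function.Bijective p' := (Fintype.bijective_iff_injective_and_card p').mpr
        ⟨hp', by simp [Fintype.card_coe, hS]⟩
      refine ⟨⟨S, (Equiv.ofBijective p' hbij').trans (S.orderIsoOfFin hS).toEquiv.symm⟩,
        Finset.mem_sigma.mpr ⟨hmem, Finset.mem_univ _⟩, funext fun i => ?_⟩
      show ((S.orderIsoOfFin hS) ((S.orderIsoOfFin hS).symm (p' i)) : Fin n) = p i
      rw [OrderIso.apply_symm_apply]
    · intro x hx
      have hc := (Finset.mem_powersetCard.mp (Finset.mem_sigma.mp hx).1).2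
      rw [hg]; dsimp only; rw [dif_pos hc]
      rfl
  rw [← hbij, hT, Finset.sum_sigma]
  refine Finset.sum_congr rfl fun S hS => ?_
  have hc := (Finset.mem_powersetCard.mp hS).2
  rw [dif_pos hc]
  have hsum : ∀ σ : Perm (Fin r), g ⟨S, σ⟩
      = ((Perm.sign σ : ℤ) : R) * (A.submatrix id (fun i => (S.orderIsoOfFin hc i : Fin n))).det *
        ∏ i, B (S.orderIsoOfFin hc (σ i) : Fin n) i := by
    intro σ
    rw [hg]; dsimp only; rw [dif_pos hc]
    have : A.submatrix id ((fun i => (S.orderIsoOfFin hc i : Fin n)) ∘ σ)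
        = (A.submatrix id (fun i => (S.orderIsoOfFin hc i : Fin n))).submatrix id σ := by
      simp [Matrix.submatrix_submatrix]
    rw [this, Matrix.det_permute' σ]
  simp_rw [hsum]
  rw [det_apply' (B.submatrix _ id), Finset.mul_sum]
  refine Finset.sum_congr rfl fun σ _ => ?_
  simp only [submatrix_apply, id_eq, zsmul_eq_mul]
  push_cast
  ring


theorem nat_card_quotient_span_rows {ι : Type*} [Fintype ι] [DecidableEq ι]
    (A : Matrix ι ι ℤ) (hA : A.det ≠ 0) :
    Nat.card ((ι → ℤ) ⧸ Submodule.span ℤ (Set.range fun i => A i)) = A.det.natAbs := by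
  classical
  set N : Submodule ℤ (ι → ℤ) := Submodule.span ℤ (Set.range fun i => A i) with hN
  have hrange : LinearMap.range (Matrix.mulVecLin Aᵀ) = N := by
    rw [Matrix.range_mulVecLin]; rfl
  have hinj : Function.Injective (Matrix.mulVecLin Aᵀ) := by
    rw [← LinearMap.ker_eq_bot, Submodule.eq_bot_iff]
    intro v hv
    by_contra h0
    exact hA (Matrix.det_transpose A ▸ Matrix.exists_mulVec_eq_zero_iff.mp ⟨v, h0, hv⟩)
  let e₁ : (ι → ℤ) ≃ₗ[ℤ] N :=
    (LinearEquiv.ofInjective _ hinj).trans (LinearEquiv.ofEq _ _ hrange)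
  have he₁ : ∀ x, (e₁ x : ι → ℤ) = Matrix.mulVecLin Aᵀ x := by
    intro x
    simp [e₁]
  obtain ⟨k, snf⟩ := N.smithNormalForm (Pi.basisFun ℤ ι)
  have hk : k = Fintype.card ι := by
    have hc := card_eq_of_linearEquiv ℤ (snf.bN.equivFun.symm.trans e₁.symm)
    simpa using hc
  have hfbij : Function.Bijective snf.f :=
    (Fintype.bijective_iff_injective_and_card _).mpr ⟨snf.f.injective, by simp [hk]⟩
  set σe : Fin k ≃ ι := Equiv.ofBijective _ hfbij with hσe
  set h : Module.Basis ι ℤ N := snf.bN.reindex σe with hh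
  set e₂ : (ι → ℤ) ≃ₗ[ℤ] N := snf.bM.equiv h (Equiv.refl ι) with he₂
  set g : (ι → ℤ) →ₗ[ℤ] (ι → ℤ) := (N.subtype).comp (e₂ : (ι → ℤ) →ₗ[ℤ] N) with hgdef
  have hg : ∀ j, g (snf.bM j) = snf.a (σe.symm j) • snf.bM j := by
    intro j
    have h1 : g (snf.bM j) = (h j : ι → ℤ) := by
      simp [hgdef, he₂, Module.Basis.equiv_apply]
    rw [h1, hh, Module.Basis.reindex_apply, snf.snf]
    have h2 : snf.f (σe.symm j) = j := σe.apply_symm_apply j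
    rw [h2]
  have hdetg : LinearMap.det g = ∏ j, snf.a (σe.symm j) := by
    rw [← LinearMap.det_toMatrix snf.bM]
    have : LinearMap.toMatrix snf.bM snf.bM g = Matrix.diagonal (fun j => snf.a (σe.symm j)) := by
      ext i j
      rw [LinearMap.toMatrix_apply, hg j, _root_.map_smul, Module.Basis.repr_self]
      rcases eq_or_ne i j with rfl | hij
      · simp [Matrix.diagonal_apply, Finsupp.single_apply]
      · simp [Matrix.diagonal_apply, Finsupp.single_apply, hij, Ne.symm hij]
    rw [this, Matrix.det_diagonal]
  -- relate det of mulVecLin Aᵀ with det g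
  set u : (ι → ℤ) ≃ₗ[ℤ] (ι → ℤ) := e₁.trans e₂.symm with hu
  have hfu : (Matrix.mulVecLin Aᵀ : (ι → ℤ) →ₗ[ℤ] (ι → ℤ)) = g.comp (u : (ι → ℤ) →ₗ[ℤ] (ι → ℤ)) := by
    refine LinearMap.ext fun x => ?_
    show Matrix.mulVecLin Aᵀ x = ↑(e₂ (e₂.symm (e₁ x)))
    rw [LinearEquiv.apply_symm_apply, he₁]
  have hdetA : A.det = LinearMap.det (Matrix.mulVecLin Aᵀ) := by
    rw [← Matrix.det_transpose A, ← LinearMap.det_toLin' Aᵀ, Matrix.toLin'_apply']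
  have hunit : IsUnit (LinearMap.det (u : (ι → ℤ) →ₗ[ℤ] (ι → ℤ))) := u.isUnit_det'
  have habs : A.det.natAbs = ∏ i, (snf.a i).natAbs := by
    rw [hdetA, hfu, LinearMap.det_comp, Int.natAbs_mul]
    have hprod : (∏ j, snf.a (σe.symm j)).natAbs = ∏ i, (snf.a i).natAbs :=
      (map_prod Int.natAbsHom _ _).trans (Equiv.prod_comp σe.symm fun i => (snf.a i).natAbs)
    rcases Int.isUnit_iff.mp hunit with h1 | h1 <;>
      rw [h1] <;> simp [hdetg, hprod]
  -- index computation
  have hidx : N.toAddSubgroup.index = ∏ i, (snf.a i).natAbs := by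
    rw [snf.toAddSubgroup_index_eq_pow_mul_prod]
    have : Fintype.card ι - k = 0 := by omega
    simp [this, Ideal.span_singleton_toAddSubgroup_eq_zmultiples, Int.index_zmultiples]
  have hcard : Nat.card ((ι → ℤ) ⧸ N) = N.toAddSubgroup.index := rfl
  rw [hcard, hidx, habs]


theorem stmt6_aux_det {r m : ℕ} (M : Matrix (Fin r) (Fin m) ℤ) :
    ((1 : Matrix (Fin r) (Fin r) ℤ) + M * Mᵀ).det =
      ∑ B ∈ Finset.powersetCard r (Finset.univ : Finset (Fin r ⊕ Fin m)),
        ((mult M B : ℤ)) ^ 2 := by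
  classical
  set A : Matrix (Fin r) (Fin (r + m)) ℤ := (Dmat M).submatrix id finSumFinEquiv.symm with hA
  have hDD : A * Aᵀ = (1 : Matrix (Fin r) (Fin r) ℤ) + M * Mᵀ := by
    rw [hA, Matrix.transpose_submatrix, Matrix.submatrix_mul_equiv,
      Matrix.submatrix_id_id, Dmat, Matrix.transpose_fromCols,
      Matrix.fromCols_mul_fromRows, Matrix.transpose_one, Matrix.mul_one]
  rw [← hDD, cauchy_binet]
  refine Finset.sum_nbij' (fun S => S.image finSumFinEquiv.symm)
    (fun B => B.image finSumFinEquiv) ?_ ?_ ?_ ?_ ?_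
  · intro S hS
    obtain ⟨-, hc⟩ := Finset.mem_powersetCard.mp hS
    exact Finset.mem_powersetCard.mpr ⟨Finset.subset_univ _,
      by rw [Finset.card_image_of_injective _ finSumFinEquiv.symm.injective]; exact hc⟩
  · intro B hB
    obtain ⟨-, hc⟩ := Finset.mem_powersetCard.mp hB
    exact Finset.mem_powersetCard.mpr ⟨Finset.subset_univ _,
      by rw [Finset.card_image_of_injective _ finSumFinEquiv.injective]; exact hc⟩
  · intro S _
    simp [Finset.image_image]
  · intro B _
    simp [Finset.image_image]
  · intro S hS
    obtain ⟨-, hSc⟩ := Finset.mem_powersetCard.mp hS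
    rw [dif_pos hSc]
    have hBimg : (S.image finSumFinEquiv.symm).image finSumFinEquiv = S := by
      simp [Finset.image_image]
    generalize hBdef : S.image finSumFinEquiv.symm = B at hBimg ⊢
    subst hBimg
    have hmult : (mult M B : ℤ) = ((Dmat M).submatrix id (colEnum B hSc)).det.natAbs := by
      rw [mult, dif_pos hSc]
    rw [hmult]
    have hsub : A.submatrix id
          (fun i => ((B.image finSumFinEquiv).orderIsoOfFin hSc i : Fin (r + m)))
        = (Dmat M).submatrix id (colEnum B hSc) := by
      rw [hA, Matrix.submatrix_submatrix]
      rfl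
    have htr : Aᵀ.submatrix
          (fun i => ((B.image finSumFinEquiv).orderIsoOfFin hSc i : Fin (r + m))) id
        = (A.submatrix id
            (fun i => ((B.image finSumFinEquiv).orderIsoOfFin hSc i : Fin (r + m))))ᵀ := by
      simp [hA, Matrix.transpose_submatrix, Matrix.submatrix_submatrix, Function.comp]
    rw [htr, Matrix.det_transpose, hsub, ← pow_two, Int.natAbs_sq]

end CB

/-- sandpile matrix-tree theorem: `|S(D)| = Σ_B m(B)²`, summed over all
`r`-subsets `B` of the columns (non-bases contribute `0`); equivalently
`det(I_r + M Mᵀ) = Σ_B det(D|_B)²`. -/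
theorem stmt6 {r m : ℕ} (M : Matrix (Fin r) (Fin m) ℤ) :
    Nat.card (((Fin r ⊕ Fin m) → ℤ) ⧸ LatZ M) =
      ∑ B ∈ Finset.powersetCard r (Finset.univ : Finset (Fin r ⊕ Fin m)),
        (mult M B) ^ 2 ∧
    ((1 : Matrix (Fin r) (Fin r) ℤ) + M * Mᵀ).det =
      ∑ B ∈ Finset.powersetCard r (Finset.univ : Finset (Fin r ⊕ Fin m)),
        ((mult M B : ℤ)) ^ 2 := by
  classical
  have hdet := stmt6_aux_det M
  have hDfull : (Dfull M).det = ((1 : Matrix (Fin r) (Fin r) ℤ) + M * Mᵀ).det := by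
    rw [Dfull, Matrix.det_fromBlocks_one₂₂, Matrix.mul_neg, sub_neg_eq_add]
  have hne : ((1 : Matrix (Fin r) (Fin r) ℤ) + M * Mᵀ).det ≠ 0 := by
    intro h0
    obtain ⟨v, hv0, hv⟩ := Matrix.exists_mulVec_eq_zero_iff.mpr h0
    have hdp : v ⬝ᵥ (((1 : Matrix (Fin r) (Fin r) ℤ) + M * Mᵀ) *ᵥ v) = 0 := by
      rw [hv, dotProduct_zero]
    rw [Matrix.add_mulVec, Matrix.one_mulVec, dotProduct_add] at hdp
    have h2 : v ⬝ᵥ ((M * Mᵀ) *ᵥ v) = (v ᵥ* M) ⬝ᵥ (v ᵥ* M) := by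
      rw [← Matrix.mulVec_mulVec, Matrix.dotProduct_mulVec, Matrix.mulVec_transpose]
    rw [h2] at hdp
    have hvv : 0 ≤ v ⬝ᵥ v := Finset.sum_nonneg fun i _ => mul_self_nonneg _
    have hww : 0 ≤ (v ᵥ* M) ⬝ᵥ (v ᵥ* M) := Finset.sum_nonneg fun i _ => mul_self_nonneg _
    have hvz : v ⬝ᵥ v = 0 := by linarith
    apply hv0
    funext i
    have := (Finset.sum_eq_zero_iff_of_nonneg
      (fun i _ => mul_self_nonneg (v i))).mp hvz i (Finset.mem_univ i)
    exact mul_self_eq_zero.mp this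
  have hcast : ∑ B ∈ Finset.powersetCard r (Finset.univ : Finset (Fin r ⊕ Fin m)),
      ((mult M B : ℤ)) ^ 2
      = ((∑ B ∈ Finset.powersetCard r (Finset.univ : Finset (Fin r ⊕ Fin m)),
          (mult M B) ^ 2 : ℕ) : ℤ) := by
    push_cast
    rfl
  refine ⟨?_, hdet⟩
  have h1 : Nat.card (((Fin r ⊕ Fin m) → ℤ) ⧸ LatZ M) = (Dfull M).det.natAbs := by
    apply nat_card_quotient_span_rows
    rw [hDfull]
    exact hne
  rw [h1, hDfull, hdet, hcast, Int.natAbs_natCast]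
end

section
/- Let D = (I_r | M) be a standard representative matrix and let B₁ ≠ B₂ be two bases of D. Then the open parallelepipeds P(B₁)° and P(B₂)° are disjoint, where P(B) ⊂ R^n is the product of the open fundamental parallelepiped of the columns of D indexed by B (in R^r) with the open fundamental parallelepiped of the columns of D̂ indexed by the complement of B (in R^{n−r}). -/
open Matrix MeasureTheory
open scoped ENNReal

/-- for distinct bases `B₁ ≠ B₂`, the open parallelepipeds `P(B₁)°` and
`P(B₂)°` are disjoint. -/
theorem stmt7 {r m : ℕ} (M : Matrix (Fin r) (Fin m) ℤ)
    (B₁ B₂ : Finset (Fin r ⊕ Fin m)) (h₁ : IsBasis M B₁) (h₂ : IsBasis M B₂)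
    (hne : B₁ ≠ B₂) :
    Popen M B₁ ∩ Popen M B₂ = ∅ := by
  rw [Set.eq_empty_iff_forall_notMem]
  rintro x ⟨⟨⟨a, ha, hxa⟩, ⟨b, hb, hxb⟩⟩, ⟨⟨a', ha', hxa'⟩, ⟨b', hb', hxb'⟩⟩⟩
  -- coefficient difference vectors
  set u : (Fin r ⊕ Fin m) → ℝ :=
    fun k => (if k ∈ B₁ then a k else 0) - (if k ∈ B₂ then a' k else 0) with hu
  set v : (Fin r ⊕ Fin m) → ℝ :=
    fun k => (if k ∈ B₁ then 0 else b k) - (if k ∈ B₂ then 0 else b' k) with hv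
  -- sums of coefficients times columns agree
  have hA : ∀ i : Fin r, ∑ k ∈ B₁, a k * ((Dmat M i k : ℤ) : ℝ)
      = ∑ k ∈ B₂, a' k * ((Dmat M i k : ℤ) : ℝ) := by
    intro i
    have e1 := congrFun hxa i
    have e2 := congrFun hxa' i
    simp only [Finset.sum_apply, Pi.smul_apply, smul_eq_mul, colD] at e1 e2
    exact e1.symm.trans e2
  have hB : ∀ j : Fin m, ∑ k ∈ B₁ᶜ, b k * ((Dhat M j k : ℤ) : ℝ)
      = ∑ k ∈ B₂ᶜ, b' k * ((Dhat M j k : ℤ) : ℝ) := by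
    intro j
    have e1 := congrFun hxb j
    have e2 := congrFun hxb' j
    simp only [Finset.sum_apply, Pi.smul_apply, smul_eq_mul, colDhat] at e1 e2
    exact e1.symm.trans e2
  have hDu : ∀ i : Fin r, ∑ k, u k * ((Dmat M i k : ℤ) : ℝ) = 0 := by
    intro i
    simp only [hu, sub_mul, ite_mul, zero_mul, Finset.sum_sub_distrib,
      Finset.sum_ite_mem, Finset.univ_inter]
    rw [hA i, sub_self]
  have hDv : ∀ j : Fin m, ∑ k, v k * ((Dhat M j k : ℤ) : ℝ) = 0 := by
    intro j
    have : ∀ (c : (Fin r ⊕ Fin m) → ℝ) (B : Finset (Fin r ⊕ Fin m)),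
        ∑ k, (if k ∈ B then 0 else c k) * ((Dhat M j k : ℤ) : ℝ)
        = ∑ k ∈ Bᶜ, c k * ((Dhat M j k : ℤ) : ℝ) := by
      intro c B
      have hsw : ∀ k, (if k ∈ B then 0 else c k) * ((Dhat M j k : ℤ) : ℝ)
          = if k ∈ Bᶜ then c k * ((Dhat M j k : ℤ) : ℝ) else 0 := by
        intro k; by_cases hk : k ∈ B <;> simp [hk]
      simp only [hsw, Finset.sum_ite_mem, Finset.univ_inter]
    simp only [hv, sub_mul, Finset.sum_sub_distrib, this]
    rw [hB j, sub_self]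
  -- u(inl i) in terms of u(inr ·)
  have h1 : ∀ i : Fin r, u (Sum.inl i) = -∑ j, u (Sum.inr j) * ((M i j : ℤ) : ℝ) := by
    intro i
    have := hDu i
    rw [Fintype.sum_sum_type] at this
    have e : ∑ i' : Fin r, u (Sum.inl i') * ((Dmat M i (Sum.inl i') : ℤ) : ℝ)
        = u (Sum.inl i) := by
      rw [Finset.sum_eq_single i]
      · simp [Dmat, Matrix.fromCols, Matrix.one_apply]
      · intro i' _ hne'
        simp [Dmat, Matrix.fromCols, Matrix.one_apply, hne'.symm]
      · simp
    rw [e] at this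
    have e2 : ∀ j : Fin m, ((Dmat M i (Sum.inr j) : ℤ) : ℝ) = ((M i j : ℤ) : ℝ) := by
      intro j; simp [Dmat, Matrix.fromCols]
    simp only [e2] at this
    linarith
  have h2 : ∀ j : Fin m, v (Sum.inr j) = ∑ i, v (Sum.inl i) * ((M i j : ℤ) : ℝ) := by
    intro j
    have := hDv j
    rw [Fintype.sum_sum_type] at this
    have e : ∑ j' : Fin m, v (Sum.inr j') * ((Dhat M j (Sum.inr j') : ℤ) : ℝ)
        = v (Sum.inr j) := by
      rw [Finset.sum_eq_single j]
      · simp [Dhat, Matrix.fromCols, Matrix.one_apply]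
      · intro j' _ hne'
        simp [Dhat, Matrix.fromCols, Matrix.one_apply, hne'.symm]
      · simp
    rw [e] at this
    have e2 : ∀ i : Fin r, ((Dhat M j (Sum.inl i) : ℤ) : ℝ) = -((M i j : ℤ) : ℝ) := by
      intro i; simp [Dhat, Matrix.fromCols, Matrix.transpose_apply]
    simp only [e2, mul_neg] at this
    rw [Finset.sum_neg_distrib] at this
    linarith
  -- orthogonality
  have horth : ∑ k, u k * v k = 0 := by
    rw [Fintype.sum_sum_type]
    simp only [h1, h2, neg_mul, Finset.sum_mul, Finset.mul_sum, Finset.sum_neg_distrib]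
    rw [neg_add_eq_zero, Finset.sum_comm]
    refine Finset.sum_congr rfl fun j _ => Finset.sum_congr rfl fun i _ => by ring
  -- each term is nonpositive
  have hnonpos : ∀ k : Fin r ⊕ Fin m, u k * v k ≤ 0 := by
    intro k
    by_cases hk1 : k ∈ B₁ <;> by_cases hk2 : k ∈ B₂ <;>
      simp only [hu, hv, hk1, hk2, if_true, if_false, sub_zero, zero_sub, sub_self,
        mul_zero, zero_mul, le_refl, neg_mul, mul_neg, neg_nonpos]
    · exact mul_nonneg (le_of_lt (ha k hk1).1)
        (le_of_lt (hb' k (Finset.mem_compl.mpr hk2)).1)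
    · exact mul_nonneg (le_of_lt (ha' k hk2).1)
        (le_of_lt (hb k (Finset.mem_compl.mpr hk1)).1)
  -- some term is strictly negative
  obtain ⟨k₀, hk₀⟩ : ∃ k, ¬(k ∈ B₁ ↔ k ∈ B₂) := by
    by_contra hcon
    push_neg at hcon
    exact hne (Finset.ext fun k => hcon k)
  have hneg : u k₀ * v k₀ < 0 := by
    rw [iff_iff_implies_and_implies, not_and_or] at hk₀
    rcases hk₀ with hk | hk <;> push_neg at hk <;> obtain ⟨hk1, hk2⟩ := hk
    · simp only [hu, hv, hk1, hk2, if_true, if_false, sub_zero, zero_sub, mul_neg,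
        neg_neg]
      exact neg_lt_zero.mpr (mul_pos (ha k₀ hk1).1 (hb' k₀ (Finset.mem_compl.mpr hk2)).1)
    · simp only [hu, hv, hk1, hk2, if_true, if_false, sub_zero, zero_sub, sub_self,
        neg_mul]
      exact neg_lt_zero.mpr (mul_pos (ha' k₀ hk1).1 (hb k₀ (Finset.mem_compl.mpr hk2)).1)
  have hlt : ∑ k, u k * v k < 0 := by
    have h0 : ∑ k ∈ Finset.univ.erase k₀, u k * v k ≤ 0 :=
      Finset.sum_nonpos fun k _ => hnonpos k
    have hsplit : u k₀ * v k₀ + ∑ k ∈ Finset.univ.erase k₀, u k * v k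
        = ∑ k, u k * v k :=
      Finset.add_sum_erase Finset.univ (fun k => u k * v k) (Finset.mem_univ k₀)
    rw [← hsplit]
    linarith
  linarith
end

section
/- Let D = (I_r | M) be a standard representative matrix. If p₁ is an interior point of P(B₁) and p₂ is an interior point of P(B₂) for bases B₁, B₂ of D, and p₁ − p₂ ∈ im_Z(𝐃^T), then p₁ = p₂ (and B₁ = B₂). -/
open Matrix MeasureTheory
open scoped ENNReal

section Stmt8Aux

private lemma stmt8_sumDmat {r m : ℕ} (M : Matrix (Fin r) (Fin m) ℤ)
    (g : (Fin r ⊕ Fin m) → ℝ) (i : Fin r) :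
    ∑ j, g j * (Dmat M i j : ℝ) = g (Sum.inl i) + ∑ k, g (Sum.inr k) * (M i k : ℝ) := by
  rw [Fintype.sum_sum_type]
  simp [Dmat, Matrix.fromCols, Matrix.one_apply, apply_ite (fun t : ℤ => (t : ℝ)),
    mul_ite, Finset.sum_ite_eq]

private lemma stmt8_sumDhat {r m : ℕ} (M : Matrix (Fin r) (Fin m) ℤ)
    (g : (Fin r ⊕ Fin m) → ℝ) (k : Fin m) :
    ∑ j, g j * (Dhat M k j : ℝ) = -∑ i, g (Sum.inl i) * (M i k : ℝ) + g (Sum.inr k) := by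
  rw [Fintype.sum_sum_type]
  simp [Dhat, Matrix.fromCols, Matrix.one_apply, apply_ite (fun t : ℤ => (t : ℝ)),
    mul_ite, Finset.sum_ite_eq, Matrix.transpose_apply]

private lemma stmt8_fullInl {r m : ℕ} (M : Matrix (Fin r) (Fin m) ℤ)
    (z : (Fin r ⊕ Fin m) → ℤ) (i : Fin r) :
    ∑ j, (z j : ℝ) * (Dfull M j (Sum.inl i) : ℝ)
      = (z (Sum.inl i) : ℝ) - ∑ k, (z (Sum.inr k) : ℝ) * (M i k : ℝ) := by
  rw [Fintype.sum_sum_type]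
  simp [Dfull, Matrix.fromBlocks, Matrix.one_apply, apply_ite (fun t : ℤ => (t : ℝ)),
    mul_ite, Finset.sum_ite_eq', Matrix.transpose_apply]
  ring_nf

private lemma stmt8_fullInr {r m : ℕ} (M : Matrix (Fin r) (Fin m) ℤ)
    (z : (Fin r ⊕ Fin m) → ℤ) (k : Fin m) :
    ∑ j, (z j : ℝ) * (Dfull M j (Sum.inr k) : ℝ)
      = ∑ i, (z (Sum.inl i) : ℝ) * (M i k : ℝ) + (z (Sum.inr k) : ℝ) := by
  rw [Fintype.sum_sum_type]
  simp [Dfull, Matrix.fromBlocks, Matrix.one_apply, apply_ite (fun t : ℤ => (t : ℝ)),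
    mul_ite, Finset.sum_ite_eq']

private lemma stmt8_key (cj dj : ℝ) (n : ℤ) (hc1 : -1 < cj) (hc2 : cj < 1)
    (hd1 : -1 < dj) (hd2 : dj < 1) (hcd : cj * dj ≤ 0) :
    (cj - n) * (dj + n) ≤ 0 ∧ ((cj - n) * (dj + n) = 0 → (n : ℝ) = 0 ∧ cj * dj = 0) := by
  rcases lt_trichotomy n 0 with h | h | h
  · have h1 : (n : ℝ) ≤ -1 := by
      have : n ≤ -1 := by omega
      exact_mod_cast this
    have hlt : (cj - n) * (dj + n) < 0 :=
      mul_neg_of_pos_of_neg (by linarith) (by linarith)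
    exact ⟨le_of_lt hlt, fun h0 => absurd h0 (ne_of_lt hlt)⟩
  · subst h
    norm_num
    exact hcd
  · have h1 : (1 : ℝ) ≤ (n : ℝ) := by exact_mod_cast h
    have hlt : (cj - n) * (dj + n) < 0 :=
      mul_neg_of_neg_of_pos (by linarith) (by linarith)
    exact ⟨le_of_lt hlt, fun h0 => absurd h0 (ne_of_lt hlt)⟩

end Stmt8Aux


/-- interior points of the parallelepipeds `P(B₁)`, `P(B₂)` that differ by
a lattice vector of `im_ℤ(𝐃ᵀ)` must be equal (and then `B₁ = B₂`). -/
theorem stmt8 {r m : ℕ} (M : Matrix (Fin r) (Fin m) ℤ)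
    (B₁ B₂ : Finset (Fin r ⊕ Fin m)) (h₁ : IsBasis M B₁) (h₂ : IsBasis M B₂)
    (p₁ p₂ : (Fin r ⊕ Fin m) → ℝ) (hp₁ : p₁ ∈ Popen M B₁) (hp₂ : p₂ ∈ Popen M B₂)
    (hz : ∃ z : (Fin r ⊕ Fin m) → ℤ, p₁ - p₂ = latVec M z) :
    p₁ = p₂ ∧ B₁ = B₂ := by
  classical
  obtain ⟨hp₁l, hp₁r⟩ := hp₁
  obtain ⟨hp₂l, hp₂r⟩ := hp₂
  obtain ⟨a, ha, hpa⟩ := hp₁l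
  obtain ⟨b, hb, hpb⟩ := hp₁r
  obtain ⟨a', ha', hpa'⟩ := hp₂l
  obtain ⟨b', hb', hpb'⟩ := hp₂r
  obtain ⟨z, hz⟩ := hz
  set c : (Fin r ⊕ Fin m) → ℝ :=
    fun j => (if j ∈ B₁ then a j else 0) - (if j ∈ B₂ then a' j else 0) with hc
  set d : (Fin r ⊕ Fin m) → ℝ :=
    fun j => (if j ∈ B₁ᶜ then b j else 0) - (if j ∈ B₂ᶜ then b' j else 0) with hd
  set W : (Fin r ⊕ Fin m) → ℝ :=
    Sum.elim (fun i => (z (Sum.inl i) : ℝ)) (fun k => -(z (Sum.inr k) : ℝ)) with hWdef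
  have hzj : ∀ j, p₁ j - p₂ j = ∑ i, (z i : ℝ) * (Dfull M i j : ℝ) := by
    intro j
    have h := congrFun hz j
    simp only [Pi.sub_apply, latVec, Matrix.vecMul, dotProduct] at h
    rw [h]; push_cast; ring
  have hsum₁ : ∀ (B : Finset (Fin r ⊕ Fin m)) (f : (Fin r ⊕ Fin m) → ℝ)
      (X : (Fin r ⊕ Fin m) → ℝ),
      ∑ j ∈ B, f j * X j = ∑ j, (if j ∈ B then f j else 0) * X j := by
    intro B f X
    have h : ∀ j, (if j ∈ B then f j else 0) * X j = if j ∈ B then f j * X j else 0 := by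
      intro j; by_cases hj : j ∈ B <;> simp [hj]
    simp only [h, Finset.sum_ite_mem, Finset.univ_inter]
  have hPa : ∀ (p : (Fin r ⊕ Fin m) → ℝ) (B : Finset (Fin r ⊕ Fin m))
      (f : (Fin r ⊕ Fin m) → ℝ), p ∘ Sum.inl = ∑ j ∈ B, f j • colD M j →
      ∀ i, p (Sum.inl i) = ∑ j, (if j ∈ B then f j else 0) * (Dmat M i j : ℝ) := by
    intro p B f hp i
    have h := congrFun hp i
    simp only [Function.comp_apply, Finset.sum_apply, Pi.smul_apply, smul_eq_mul, colD] at h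
    rw [h, hsum₁]
  have hPb : ∀ (p : (Fin r ⊕ Fin m) → ℝ) (B : Finset (Fin r ⊕ Fin m))
      (f : (Fin r ⊕ Fin m) → ℝ), p ∘ Sum.inr = ∑ j ∈ Bᶜ, f j • colDhat M j →
      ∀ k, p (Sum.inr k) = ∑ j, (if j ∈ Bᶜ then f j else 0) * (Dhat M k j : ℝ) := by
    intro p B f hp k
    have h := congrFun hp k
    simp only [Function.comp_apply, Finset.sum_apply, Pi.smul_apply, smul_eq_mul, colDhat] at h
    rw [h, hsum₁]
  have hA : ∀ i, ∑ j, (c j - W j) * (Dmat M i j : ℝ) = 0 := by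
    intro i
    have e1 := hPa p₁ B₁ a hpa i
    have e2 := hPa p₂ B₂ a' hpa' i
    have e3 : ∑ j, W j * (Dmat M i j : ℝ) = p₁ (Sum.inl i) - p₂ (Sum.inl i) := by
      rw [stmt8_sumDmat, hzj (Sum.inl i), stmt8_fullInl]
      simp [hWdef]
      ring_nf
    have e4 : ∑ j, c j * (Dmat M i j : ℝ) = p₁ (Sum.inl i) - p₂ (Sum.inl i) := by
      rw [e1, e2, ← Finset.sum_sub_distrib]
      exact Finset.sum_congr rfl (fun j _ => by rw [hc]; ring)
    rw [show (fun j => (c j - W j) * (Dmat M i j : ℝ))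
        = fun j => c j * (Dmat M i j : ℝ) - W j * (Dmat M i j : ℝ) by
      funext j; ring]
    rw [Finset.sum_sub_distrib, e3, e4, sub_self]
  have hB : ∀ k, ∑ j, (d j + W j) * (Dhat M k j : ℝ) = 0 := by
    intro k
    have e1 := hPb p₁ B₁ b hpb k
    have e2 := hPb p₂ B₂ b' hpb' k
    have e3 : ∑ j, W j * (Dhat M k j : ℝ) = -(p₁ (Sum.inr k) - p₂ (Sum.inr k)) := by
      rw [stmt8_sumDhat, hzj (Sum.inr k), stmt8_fullInr]
      simp [hWdef]
      ring_nf
    have e4 : ∑ j, d j * (Dhat M k j : ℝ) = p₁ (Sum.inr k) - p₂ (Sum.inr k) := by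
      rw [e1, e2, ← Finset.sum_sub_distrib]
      exact Finset.sum_congr rfl (fun j _ => by rw [hd]; ring)
    rw [show (fun j => (d j + W j) * (Dhat M k j : ℝ))
        = fun j => d j * (Dhat M k j : ℝ) + W j * (Dhat M k j : ℝ) by
      funext j; ring]
    rw [Finset.sum_add_distrib, e3, e4, add_neg_cancel]
  have hvA : ∀ i, c (Sum.inl i) - W (Sum.inl i)
      = -∑ k, (c (Sum.inr k) - W (Sum.inr k)) * (M i k : ℝ) := by
    intro i
    have h := hA i
    rw [stmt8_sumDmat] at h
    linarith [h]
  have hvB : ∀ k, d (Sum.inr k) + W (Sum.inr k)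
      = ∑ i, (d (Sum.inl i) + W (Sum.inl i)) * (M i k : ℝ) := by
    intro k
    have h := hB k
    rw [stmt8_sumDhat] at h
    linarith [h]
  have horth : ∑ j, (c j - W j) * (d j + W j) = 0 := by
    rw [Fintype.sum_sum_type]
    have h1 : ∑ i, (c (Sum.inl i) - W (Sum.inl i)) * (d (Sum.inl i) + W (Sum.inl i))
        = -∑ i, ∑ k, (c (Sum.inr k) - W (Sum.inr k)) * (M i k : ℝ)
            * (d (Sum.inl i) + W (Sum.inl i)) := by
      rw [← Finset.sum_neg_distrib]
      refine Finset.sum_congr rfl (fun i _ => ?_)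
      rw [hvA i, neg_mul, Finset.sum_mul]
    have h2 : ∑ k, (c (Sum.inr k) - W (Sum.inr k)) * (d (Sum.inr k) + W (Sum.inr k))
        = ∑ k, ∑ i, (c (Sum.inr k) - W (Sum.inr k)) * (M i k : ℝ)
            * (d (Sum.inl i) + W (Sum.inl i)) := by
      refine Finset.sum_congr rfl (fun k _ => ?_)
      rw [hvB k, Finset.mul_sum]
      exact Finset.sum_congr rfl (fun i _ => by ring)
    rw [h1, h2, Finset.sum_comm]
    ring
  have hcb : ∀ j, -1 < c j ∧ c j < 1 := by
    intro j
    have h1 : 0 ≤ (if j ∈ B₁ then a j else 0) ∧ (if j ∈ B₁ then a j else 0) < 1 := by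
      by_cases hj : j ∈ B₁
      · simp only [hj, if_true]
        exact ⟨le_of_lt (ha j hj).1, (ha j hj).2⟩
      · simp [hj]
    have h2 : 0 ≤ (if j ∈ B₂ then a' j else 0) ∧ (if j ∈ B₂ then a' j else 0) < 1 := by
      by_cases hj : j ∈ B₂
      · simp only [hj, if_true]
        exact ⟨le_of_lt (ha' j hj).1, (ha' j hj).2⟩
      · simp [hj]
    constructor <;> simp only [hc] <;>
      [linarith [h1.1, h2.2]; linarith [h1.2, h2.1]]
  have hdb : ∀ j, -1 < d j ∧ d j < 1 := by
    intro j
    have h1 : 0 ≤ (if j ∈ B₁ᶜ then b j else 0) ∧ (if j ∈ B₁ᶜ then b j else 0) < 1 := by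
      by_cases hj : j ∈ B₁ᶜ
      · simp only [hj, if_true]
        exact ⟨le_of_lt (hb j hj).1, (hb j hj).2⟩
      · simp [hj]
    have h2 : 0 ≤ (if j ∈ B₂ᶜ then b' j else 0) ∧ (if j ∈ B₂ᶜ then b' j else 0) < 1 := by
      by_cases hj : j ∈ B₂ᶜ
      · simp only [hj, if_true]
        exact ⟨le_of_lt (hb' j hj).1, (hb' j hj).2⟩
      · simp [hj]
    constructor <;> simp only [hd] <;>
      [linarith [h1.1, h2.2]; linarith [h1.2, h2.1]]
  have hcd : ∀ j, c j * d j ≤ 0 := by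
    intro j
    by_cases hj1 : j ∈ B₁ <;> by_cases hj2 : j ∈ B₂
    · have hdv : d j = 0 := by simp [hd, hj1, hj2]
      rw [hdv, mul_zero]
    · have hcv : c j = a j := by simp [hc, hj1, hj2]
      have hdv : d j = -(b' j) := by simp [hd, hj1, hj2]
      have h1 := (ha j hj1).1
      have h2 := (hb' j (Finset.mem_compl.mpr hj2)).1
      rw [hcv, hdv]; nlinarith
    · have hcv : c j = -(a' j) := by simp [hc, hj1, hj2]
      have hdv : d j = b j := by simp [hd, hj1, hj2]
      have h1 := (ha' j hj2).1
      have h2 := (hb j (Finset.mem_compl.mpr hj1)).1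
      rw [hcv, hdv]; nlinarith
    · have hcv : c j = 0 := by simp [hc, hj1, hj2]
      rw [hcv, zero_mul]
  have hWn : ∀ j, ∃ n : ℤ, W j = (n : ℝ) := by
    intro j
    rcases j with i | k
    · exact ⟨z (Sum.inl i), rfl⟩
    · exact ⟨-z (Sum.inr k), by simp [hWdef]⟩
  have hterm : ∀ j, (c j - W j) * (d j + W j) ≤ 0 := by
    intro j
    obtain ⟨n, hn⟩ := hWn j
    rw [hn]
    exact (stmt8_key (c j) (d j) n (hcb j).1 (hcb j).2 (hdb j).1 (hdb j).2 (hcd j)).1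
  have hall : ∀ j, (c j - W j) * (d j + W j) = 0 := by
    intro j
    exact (Finset.sum_eq_zero_iff_of_nonpos (fun j _ => hterm j)).mp horth j
      (Finset.mem_univ j)
  have hW0 : ∀ j, W j = 0 ∧ c j * d j = 0 := by
    intro j
    obtain ⟨n, hn⟩ := hWn j
    have h := hall j
    rw [hn] at h
    have hk := (stmt8_key (c j) (d j) n (hcb j).1 (hcb j).2 (hdb j).1 (hdb j).2 (hcd j)).2 h
    exact ⟨hn ▸ hk.1, hk.2⟩
  have hz0 : ∀ j, z j = 0 := by
    intro j
    rcases j with i | k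
    · have h := (hW0 (Sum.inl i)).1
      simp only [hWdef, Sum.elim_inl] at h
      exact_mod_cast h
    · have h := (hW0 (Sum.inr k)).1
      simp only [hWdef, Sum.elim_inr, neg_eq_zero] at h
      exact_mod_cast h
  have hpe : p₁ = p₂ := by
    funext j
    have h := hzj j
    have h0 : ∑ i, (z i : ℝ) * (Dfull M i j : ℝ) = 0 :=
      Finset.sum_eq_zero fun i _ => by rw [hz0 i]; simp
    rw [h0] at h
    linarith
  refine ⟨hpe, ?_⟩
  ext j
  constructor
  · intro hj1
    by_contra hj2
    have h := (hW0 j).2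
    have hcv : c j = a j := by simp [hc, hj1, hj2]
    have hdv : d j = -(b' j) := by simp [hd, hj1, hj2]
    have ha0 := (ha j hj1).1
    have hb0 := (hb' j (Finset.mem_compl.mpr hj2)).1
    rw [hcv, hdv] at h
    nlinarith
  · intro hj2
    by_contra hj1
    have h := (hW0 j).2
    have hcv : c j = -(a' j) := by simp [hc, hj1, hj2]
    have hdv : d j = b j := by simp [hd, hj1, hj2]
    have ha0 := (ha' j hj2).1
    have hb0 := (hb j (Finset.mem_compl.mpr hj1)).1
    rw [hcv, hdv] at h
    nlinarith
end

section
/- For any basis B of a standard representative matrix D = (I_r | M), the volume (Lebesgue measure) of the parallelepiped P₁(B) spanned by the columns of D indexed by B equals m(B), the volume of P₂(B) spanned by the columns of D̂ indexed by the complement of B equals m(B), and hence the volume of P(B) = P₁(B) × P₂(B) equals m(B)². -/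
open Matrix MeasureTheory
open scoped ENNReal

section Helpers

open Set Function MeasureTheory

lemma isCompact_parallelepiped' {ι E : Type*} [Fintype ι] [NormedAddCommGroup E]
    [NormedSpace ℝ E] (v : ι → E) : IsCompact (parallelepiped v) :=
  isCompact_Icc.image
    (continuous_finset_sum _ fun i _ => (continuous_apply i).smul continuous_const)

lemma PPc_eq_parallelepiped {ι κ : Type*} [DecidableEq ι] (v : ι → κ → ℝ) (S : Finset ι) :
    PPc v S = parallelepiped (fun i : ↥S => v i) := by
  ext x
  simp only [PPc, mem_setOf_eq]
  rw [mem_parallelepiped_iff]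
  constructor
  · rintro ⟨a, ha, rfl⟩
    refine ⟨fun i => a i, Set.mem_Icc.mpr ⟨fun i => (ha i i.2).1, fun i => (ha i i.2).2⟩, ?_⟩
    rw [← Finset.sum_coe_sort S (fun i => a i • v i)]
  · rintro ⟨t, ht, rfl⟩
    rw [Set.mem_Icc] at ht
    refine ⟨fun j => if h : j ∈ S then t ⟨j, h⟩ else 0, fun j hj => ?_, ?_⟩
    · simp only [dif_pos hj]; exact ⟨ht.1 _, ht.2 _⟩
    · rw [← Finset.sum_coe_sort S (fun j => (if h : j ∈ S then t ⟨j, h⟩ else 0) • v j)]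
      exact Finset.sum_congr rfl fun i _ => by rw [dif_pos i.2]

lemma volume_parallelepiped_int {κ : Type*} [Fintype κ] [DecidableEq κ] (A : Matrix κ κ ℤ) :
    volume (parallelepiped (fun j i => (A i j : ℝ))) = (A.det.natAbs : ℝ≥0∞) := by
  have hc : (fun j i => (A i j : ℝ))
      = ⇑(Matrix.toLin' (A.map (Int.cast : ℤ → ℝ))) ∘ ⇑(Pi.basisFun ℝ κ) := by
    ext j i
    simp [Matrix.toLin'_apply, Matrix.mulVec_single]
  rw [hc, ← image_parallelepiped]
  have hb : parallelepiped ⇑(Pi.basisFun ℝ κ) = Icc 0 1 := by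
    have : ⇑(Pi.basisFun ℝ κ) = fun i => Pi.single i (1:ℝ) := by
      ext i j; simp [Pi.basisFun_apply]
    rw [this, parallelepiped_single]
    rw [show (fun _ : κ => (1:ℝ)) = (1 : κ → ℝ) from rfl]
    rw [uIcc_of_le (by norm_num : (0 : κ → ℝ) ≤ 1)]
  rw [hb, Measure.addHaar_image_linearMap, Real.volume_Icc_pi]
  simp only [Pi.one_apply, Pi.zero_apply, sub_zero, ENNReal.ofReal_one,
    Finset.prod_const_one, mul_one]
  rw [LinearMap.det_toLin']
  have : (A.map (Int.cast : ℤ → ℝ)).det = ((A.det : ℤ) : ℝ) :=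
    ((Int.castRingHom ℝ).map_det A).symm
  rw [this, ← Int.cast_abs, Int.abs_eq_natAbs, Int.cast_natCast, ENNReal.ofReal_natCast]

lemma natAbs_det_eq_of_enum {κ ι : Type*} [Fintype κ] [DecidableEq κ] [DecidableEq ι]
    (A : Matrix κ ι ℤ) (S : Finset ι) (hcard : S.card = Fintype.card κ)
    (g₁ g₂ : κ → ι) (hg₁ : ∀ i, g₁ i ∈ S) (hg₂ : ∀ i, g₂ i ∈ S)
    (inj₁ : Function.Injective g₁) (inj₂ : Function.Injective g₂) :
    ((A.submatrix id g₁).det).natAbs = ((A.submatrix id g₂).det).natAbs := by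
  have hbij : ∀ (g : κ → ι) (hg : ∀ i, g i ∈ S), Function.Injective g →
      Function.Bijective (fun i => (⟨g i, hg i⟩ : ↥S)) := by
    intro g hg hinj
    rw [Fintype.bijective_iff_injective_and_card]
    exact ⟨fun a b hab => hinj (congrArg Subtype.val hab), by rw [Fintype.card_coe, hcard]⟩
  let e₁ := Equiv.ofBijective _ (hbij g₁ hg₁ inj₁)
  let e₂ := Equiv.ofBijective _ (hbij g₂ hg₂ inj₂)
  have key : A.submatrix id g₂ = (A.submatrix id g₁).submatrix id ⇑(e₂.trans e₁.symm) := by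
    ext i j
    simp only [Matrix.submatrix_apply, id_eq]
    congr 1
    have h1 : g₁ ((e₂.trans e₁.symm) j) = ((e₁ (e₁.symm (e₂ j))) : ι) := rfl
    rw [h1, Equiv.apply_symm_apply]
    rfl
  rw [key, Matrix.det_permute' (e₂.trans e₁.symm)]
  simp [Int.natAbs_mul]

lemma natAbs_det_submatrix_row {κ κ' ι : Type*} [Fintype κ] [DecidableEq κ]
    [Fintype κ'] [DecidableEq κ'] (A : Matrix κ' ι ℤ) (ρ : κ ≃ κ') (g : κ → ι) :
    ((A.submatrix ⇑ρ g).det).natAbs = ((A.submatrix id (g ∘ ⇑ρ.symm)).det).natAbs := by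
  have h : A.submatrix ⇑ρ g = (A.submatrix id (g ∘ ⇑ρ.symm)).submatrix ⇑ρ ⇑ρ := by
    ext i j; simp
  rw [h, Matrix.det_submatrix_equiv_self]

lemma colEnum_mem {r m : ℕ} (B : Finset (Fin r ⊕ Fin m))
    (h : (B.image finSumFinEquiv).card = r) (i : Fin r) : colEnum B h i ∈ B := by
  have h2 := ((B.image finSumFinEquiv).orderIsoOfFin h i).2
  rw [Finset.mem_image] at h2
  obtain ⟨b, hb, hbe⟩ := h2
  have : colEnum B h i = b := by
    rw [colEnum, ← hbe, Equiv.symm_apply_apply]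
  rw [this]; exact hb

lemma colEnum_injective {r m : ℕ} (B : Finset (Fin r ⊕ Fin m))
    (h : (B.image finSumFinEquiv).card = r) : Function.Injective (colEnum B h) := by
  intro i j hij
  have h1 := finSumFinEquiv.symm.injective hij
  have h2 := Subtype.coe_injective h1
  exact ((B.image finSumFinEquiv).orderIsoOfFin h).injective h2

lemma mult_eq_enum {r m : ℕ} (M : Matrix (Fin r) (Fin m) ℤ) (B : Finset (Fin r ⊕ Fin m))
    (hB : B.card = r) (g : Fin r → Fin r ⊕ Fin m) (hg : ∀ i, g i ∈ B)
    (hinj : Function.Injective g) :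
    mult M B = ((Dmat M).submatrix id g).det.natAbs := by
  have h : (B.image finSumFinEquiv).card = r := by
    rw [Finset.card_image_of_injective _ finSumFinEquiv.injective, hB]
  rw [mult, dif_pos h]
  exact natAbs_det_eq_of_enum (Dmat M) B (by simpa using hB) _ _
    (colEnum_mem B h) hg (colEnum_injective B h) hinj

lemma dual_det {r m : ℕ} (M : Matrix (Fin r) (Fin m) ℤ) (B : Finset (Fin r ⊕ Fin m))
    (hB : B.card = r) (g : Fin m → Fin r ⊕ Fin m) (hg : ∀ i, g i ∈ Bᶜ)
    (hinj : Function.Injective g) :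
    ((Dhat M).submatrix id g).det.natAbs = mult M B := by
  classical
  set B₁ : Finset (Fin r) := Finset.univ.filter (fun i => Sum.inl i ∈ B) with hB₁
  set B₂ : Finset (Fin m) := Finset.univ.filter (fun j => Sum.inr j ∈ B) with hB₂
  have hmem₁ : ∀ i, i ∈ B₁ ↔ Sum.inl i ∈ B := by intro i; simp [hB₁]
  have hmem₂ : ∀ j, j ∈ B₂ ↔ Sum.inr j ∈ B := by intro j; simp [hB₂]
  have hcards : B₁.card + B₂.card = r := by
    have hU : B = B₁.image Sum.inl ∪ B₂.image Sum.inr := by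
      ext x
      cases x with
      | inl a => simp [hmem₁ a]
      | inr b => simp [hmem₂ b]
    have hdisj : Disjoint (B₁.image Sum.inl) (B₂.image Sum.inr) := by
      rw [Finset.disjoint_left]
      rintro x hx hy
      rw [Finset.mem_image] at hx hy
      obtain ⟨a, _, rfl⟩ := hx
      obtain ⟨b, _, h⟩ := hy
      exact Sum.inl_ne_inr h.symm
    have hc2 : (B₁.image Sum.inl ∪ B₂.image Sum.inr).card = B₁.card + B₂.card := by
      rw [Finset.card_union_of_disjoint hdisj,
        Finset.card_image_of_injective _ Sum.inl_injective,
        Finset.card_image_of_injective _ Sum.inr_injective]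
    rw [← hU] at hc2
    omega
  have hφcard : Fintype.card ↥(B₁ᶜ) = Fintype.card ↥B₂ := by
    rw [Fintype.card_coe, Fintype.card_coe, Finset.card_compl]
    have := B₁.card_le_univ
    simp only [Fintype.card_fin] at *
    omega
  let φ : ↥(B₁ᶜ) ≃ ↥B₂ := Fintype.equivOfCardEq hφcard
  let ρ : (↥B₁ ⊕ ↥(B₁ᶜ)) ≃ Fin r :=
    (Equiv.sumCongr (Equiv.refl _)
      (Equiv.subtypeEquivRight (fun a => Finset.mem_compl))).trans
      (Equiv.sumCompl (· ∈ B₁))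
  let ρ' : (↥B₂ ⊕ ↥(B₂ᶜ)) ≃ Fin m :=
    (Equiv.sumCongr (Equiv.refl _)
      (Equiv.subtypeEquivRight (fun a => Finset.mem_compl))).trans
      (Equiv.sumCompl (· ∈ B₂))
  have hρl : ∀ i : ↥B₁, ρ (Sum.inl i) = i.val := fun i => rfl
  have hρr : ∀ c : ↥(B₁ᶜ), ρ (Sum.inr c) = c.val := fun c => rfl
  have hρ'l : ∀ b : ↥B₂, ρ' (Sum.inl b) = b.val := fun b => rfl
  have hρ'r : ∀ c : ↥(B₂ᶜ), ρ' (Sum.inr c) = c.val := fun c => rfl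
  set γ : (↥B₁ ⊕ ↥(B₁ᶜ)) → Fin r ⊕ Fin m :=
    Sum.elim (fun i => Sum.inl i.val) (fun c => Sum.inr (φ c).val) with hγ
  set γ' : (↥B₂ ⊕ ↥(B₂ᶜ)) → Fin r ⊕ Fin m :=
    Sum.elim (fun b => Sum.inl (φ.symm b).val) (fun c => Sum.inr c.val) with hγ'
  set Y : Matrix ↥(B₁ᶜ) ↥(B₁ᶜ) ℤ := Matrix.of fun c c' => M c.val (φ c').val with hY
  -- D-side block decomposition
  have hN : (Dmat M).submatrix ⇑ρ γ =
      Matrix.fromBlocks 1 (Matrix.of fun (i : ↥B₁) (c : ↥(B₁ᶜ)) => M i.val (φ c).val) 0 Y := by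
    ext i j
    cases i with
    | inl a =>
      cases j with
      | inl a' =>
        simp [Dmat, hγ, hρl, Matrix.fromCols_apply_inl, Matrix.fromCols_apply_inr, Matrix.one_apply, Subtype.val_inj]
      | inr c =>
        simp [Dmat, hγ, hρl, Matrix.fromCols_apply_inr]
    | inr c =>
      cases j with
      | inl a' =>
        have hne : (c : Fin r) ≠ (a' : Fin r) := by
          intro hcon
          exact (Finset.mem_compl.mp c.2) (hcon ▸ a'.2)
        simp [Dmat, hγ, hρr, Matrix.fromCols_apply_inl, Matrix.one_apply, hne]
      | inr c' =>
        simp [Dmat, hγ, hρr, hY, Matrix.fromCols_apply_inr]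
  have hγB : ∀ x, γ x ∈ B := by
    rintro (a | c)
    · exact (hmem₁ _).mp a.2
    · exact (hmem₂ _).mp (φ c).2
  have hγinj : Function.Injective γ := by
    rintro (a | c) (a' | c') h <;> simp only [hγ, Sum.elim_inl, Sum.elim_inr] at h
    · exact congrArg Sum.inl (Subtype.ext (Sum.inl_injective h))
    · exact absurd h (by simp)
    · exact absurd h (by simp)
    · exact congrArg Sum.inr (φ.injective (Subtype.ext (Sum.inr_injective h)))
  have h1 : mult M B = Y.det.natAbs := by
    rw [mult_eq_enum M B hB (γ ∘ ⇑ρ.symm) (fun i => hγB _) (hγinj.comp ρ.symm.injective)]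
    rw [← natAbs_det_submatrix_row (Dmat M) ρ γ, hN, Matrix.det_fromBlocks_zero₂₁]
    simp [Int.natAbs_mul]
  -- Dhat-side block decomposition
  set Y' : Matrix ↥B₂ ↥B₂ ℤ := Matrix.of fun b b' => -(M (φ.symm b').val b.val) with hY'
  have hN' : (Dhat M).submatrix ⇑ρ' γ' =
      Matrix.fromBlocks Y' 0
        (Matrix.of fun (c : ↥(B₂ᶜ)) (b' : ↥B₂) => -(M (φ.symm b').val c.val)) 1 := by
    ext i j
    cases i with
    | inl b =>
      cases j with
      | inl b' =>
        simp [Dhat, hγ', hρ'l, hY', Matrix.fromCols_apply_inl]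
      | inr c =>
        have hne : (b : Fin m) ≠ (c : Fin m) := by
          intro hcon
          exact (Finset.mem_compl.mp c.2) (hcon ▸ b.2)
        simp [Dhat, hγ', hρ'l, Matrix.fromCols_apply_inr, Matrix.one_apply, hne]
    | inr c =>
      cases j with
      | inl b' =>
        simp [Dhat, hγ', hρ'r, Matrix.fromCols_apply_inl]
      | inr c' =>
        simp [Dhat, hγ', hρ'r, Matrix.fromCols_apply_inr, Matrix.one_apply, Subtype.val_inj]
  have hγ'C : ∀ x, γ' x ∈ Bᶜ := by
    rintro (b | c)
    · rw [Finset.mem_compl]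
      intro hcon
      exact (Finset.mem_compl.mp (φ.symm b).2) ((hmem₁ _).mpr hcon)
    · rw [Finset.mem_compl]
      intro hcon
      exact (Finset.mem_compl.mp c.2) ((hmem₂ _).mpr hcon)
  have hγ'inj : Function.Injective γ' := by
    rintro (b | c) (b' | c') h <;> simp only [hγ', Sum.elim_inl, Sum.elim_inr] at h
    · exact congrArg Sum.inl (φ.symm.injective (Subtype.ext (Sum.inl_injective h)))
    · exact absurd h (by simp)
    · exact absurd h (by simp)
    · exact congrArg Sum.inr (Subtype.ext (Sum.inr_injective h))
  have hcardC : Bᶜ.card = Fintype.card (Fin m) := by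
    rw [Finset.card_compl, hB]
    simp [Fintype.card_sum]
  have h2 : ((Dhat M).submatrix id g).det.natAbs = Y'.det.natAbs := by
    rw [natAbs_det_eq_of_enum (Dhat M) Bᶜ hcardC g (γ' ∘ ⇑ρ'.symm) hg (fun i => hγ'C _)
      hinj (hγ'inj.comp ρ'.symm.injective)]
    rw [← natAbs_det_submatrix_row (Dhat M) ρ' γ', hN', Matrix.det_fromBlocks_zero₁₂]
    simp [Int.natAbs_mul]
  have h3 : Y'.det.natAbs = Y.det.natAbs := by
    have hYY : Y' = -((Y.submatrix ⇑φ.symm ⇑φ.symm)ᵀ) := by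
      ext b b'
      simp [hY', hY]
    rw [hYY, Matrix.det_neg, Matrix.det_transpose, Matrix.det_submatrix_equiv_self]
    simp [Int.natAbs_mul, Int.natAbs_pow]
  rw [h2, h3, h1]

end Helpers

/-- `vol P₁(B) = m(B)`, `vol P₂(B) = m(B)`, and `vol P(B) = m(B)²`. -/
theorem stmt9 {r m : ℕ} (M : Matrix (Fin r) (Fin m) ℤ)
    (B : Finset (Fin r ⊕ Fin m)) (hB : IsBasis M B) :
    volume (PPc (colD M) B) = (mult M B : ℝ≥0∞) ∧
    volume (PPc (colDhat M) Bᶜ) = (mult M B : ℝ≥0∞) ∧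
    volume (Pclosed M B) = (mult M B : ℝ≥0∞) ^ 2 := by
  classical
  obtain ⟨hBcard, -⟩ := hB
  -- P₁
  have hcardB : Fintype.card ↥B = r := by rw [Fintype.card_coe, hBcard]
  let εB : ↥B ≃ Fin r := Fintype.equivFinOfCardEq hcardB
  have hP1 : PPc (colD M) B
      = parallelepiped (fun j i => (((Dmat M).submatrix id
          (fun j => ((εB.symm j : ↥B) : Fin r ⊕ Fin m))) i j : ℝ)) := by
    rw [PPc_eq_parallelepiped]
    rw [← parallelepiped_comp_equiv (fun i : ↥B => colD M i) εB.symm]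
    rfl
  have h1 : volume (PPc (colD M) B) = (mult M B : ℝ≥0∞) := by
    rw [hP1, volume_parallelepiped_int]
    rw [← mult_eq_enum M B hBcard _ (fun j => (εB.symm j).2)
      (fun a b hab => εB.symm.injective (Subtype.coe_injective hab))]
  -- P₂
  have hcardC : Fintype.card ↥(Bᶜ) = m := by
    rw [Fintype.card_coe, Finset.card_compl, hBcard]
    simp [Fintype.card_sum]
  let εC : ↥(Bᶜ) ≃ Fin m := Fintype.equivFinOfCardEq hcardC
  have hP2 : PPc (colDhat M) Bᶜ
      = parallelepiped (fun j i => (((Dhat M).submatrix id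
          (fun j => ((εC.symm j : ↥(Bᶜ)) : Fin r ⊕ Fin m))) i j : ℝ)) := by
    rw [PPc_eq_parallelepiped]
    rw [← parallelepiped_comp_equiv (fun i : ↥(Bᶜ) => colDhat M i) εC.symm]
    rfl
  have h2 : volume (PPc (colDhat M) Bᶜ) = (mult M B : ℝ≥0∞) := by
    rw [hP2, volume_parallelepiped_int]
    rw [dual_det M B hBcard _ (fun j => (εC.symm j).2)
      (fun a b hab => εC.symm.injective (Subtype.coe_injective hab))]
  refine ⟨h1, h2, ?_⟩
  -- product
  have hsplit : Pclosed M B =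
      (MeasurableEquiv.sumPiEquivProdPi (fun _ : Fin r ⊕ Fin m => ℝ)) ⁻¹'
        ((PPc (colD M) B) ×ˢ (PPc (colDhat M) Bᶜ)) := rfl
  have hMP : MeasurePreserving
      (MeasurableEquiv.sumPiEquivProdPi (fun _ : Fin r ⊕ Fin m => ℝ)) volume volume := by
    have h := (volume_measurePreserving_sumPiEquivProdPi_symm
      (fun _ : Fin r ⊕ Fin m => ℝ)).symm
      (MeasurableEquiv.sumPiEquivProdPi (fun _ : Fin r ⊕ Fin m => ℝ)).symm
    simpa using h
  have hm1 : MeasurableSet (PPc (colD M) B) := by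
    rw [hP1]; exact (isCompact_parallelepiped' _).measurableSet
  have hm2 : MeasurableSet (PPc (colDhat M) Bᶜ) := by
    rw [hP2]; exact (isCompact_parallelepiped' _).measurableSet
  rw [hsplit, hMP.measure_preimage (hm1.prod hm2).nullMeasurableSet]
  rw [show (volume : Measure ((Fin r → ℝ) × (Fin m → ℝ))) = (volume : Measure (Fin r → ℝ)).prod volume from rfl]
  rw [Measure.prod_prod, h1, h2, sq]
end

section
/- For a standard representative matrix D = (I_r | M) and any basis B, the absolute value of the determinant of D̂ restricted to the columns not in B equals the absolute value of the determinant of D restricted to the columns in B. -/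
open Matrix MeasureTheory
open scoped ENNReal

/-- `|det(D̂|_{[n]∖B})| = |det(D|_B)|` for any basis `B` of the standard
representative matrix `D = (I_r | M)`. Here the basis is given by an injective
enumeration `g` of `B` and `ĝ` of its complement. -/
theorem stmt10 {r m : ℕ} (M : Matrix (Fin r) (Fin m) ℤ)
    (g : Fin r → Fin r ⊕ Fin m) (gh : Fin m → Fin r ⊕ Fin m)
    (hg : Function.Injective g) (hgh : Function.Injective gh)
    (hcompl : Set.range gh = (Set.range g)ᶜ)
    (hdet : ((Dmat M).submatrix id g).det ≠ 0) :
    ((Dhat M).submatrix id gh).det.natAbs = ((Dmat M).submatrix id g).det.natAbs := by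
  classical
  set D := Dmat M with hD
  set Dh := Dhat M with hDh
  set X := D.submatrix id g with hX
  set Z := D.submatrix id gh with hZ
  set Y := Dh.submatrix id gh with hY
  set E : Matrix (Fin m) (Fin r ⊕ Fin m) ℤ := Matrix.of fun b j => if gh b = j then 1 else 0
    with hE
  set Q : Matrix (Fin r ⊕ Fin m) (Fin r ⊕ Fin m) ℤ := Matrix.fromRows D E with hQ
  -- the map Sum.elim g gh is bijective
  have hdisj : ∀ b a, gh b ≠ g a := by
    intro b a h
    have h1 : gh b ∈ Set.range gh := ⟨b, rfl⟩
    rw [hcompl] at h1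
    exact h1 ⟨a, h.symm⟩
  have hfinj : Function.Injective (Sum.elim g gh) := by
    rintro (a | b) (a' | b') h
    · exact congrArg Sum.inl (hg h)
    · exact absurd h.symm (hdisj _ _)
    · exact absurd h (hdisj _ _)
    · exact congrArg Sum.inr (hgh h)
  have hfbij : Function.Bijective (Sum.elim g gh) :=
    (Finite.injective_iff_bijective).mp hfinj
  set σ : Equiv.Perm (Fin r ⊕ Fin m) := Equiv.ofBijective _ hfbij with hσ
  -- Lemma A : column-permuted Q is block triangular
  have hA : Q.submatrix id ⇑σ = Matrix.fromBlocks X Z 0 1 := by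
    ext i j
    have hσapp : ∀ k, σ k = Sum.elim g gh k := fun k => rfl
    cases i <;> cases j <;>
      simp [hσapp, hQ, hE, Matrix.one_apply, hgh.eq_iff, hdisj _ _, hX, hZ]
  -- Lemma B : Q * Dfullᵀ is block triangular
  have hB : Q * (Dfull M)ᵀ = Matrix.fromBlocks (1 + M * Mᵀ) 0 Zᵀ Yᵀ := by
    have hDfull : Dfull M = Matrix.fromRows D Dh := by
      rw [hD, hDh, Dmat, Dhat, Dfull, Matrix.fromRows_fromCols_eq_fromBlocks]
    have h11 : D * Dᵀ = 1 + M * Mᵀ := by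
      rw [hD, Dmat, Matrix.transpose_fromCols, Matrix.fromCols_mul_fromRows]
      simp
    have h12 : D * Dhᵀ = 0 := by
      rw [hD, hDh, Dmat, Dhat, Matrix.transpose_fromCols, Matrix.fromCols_mul_fromRows]
      simp
    have h21 : E * Dᵀ = Zᵀ := by
      ext b a
      simp [hE, Matrix.mul_apply, hZ]
    have h22 : E * Dhᵀ = Yᵀ := by
      ext b b'
      simp [hE, Matrix.mul_apply, hY]
    rw [hDfull, Matrix.transpose_fromRows, hQ, Matrix.fromRows_mul_fromCols,
      h11, h12, h21, h22]
  -- determinant computations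
  have hdQ : Q.det.natAbs = X.det.natAbs := by
    have h1 : (Q.submatrix id ⇑σ).det = Equiv.Perm.sign σ * Q.det :=
      Matrix.det_permute' σ Q
    have h2 : (Q.submatrix id ⇑σ).det = X.det := by
      rw [hA, Matrix.det_fromBlocks_zero₂₁]
      simp
    rcases Int.units_eq_one_or (Equiv.Perm.sign σ) with h | h <;>
      rw [h] at h1 <;> simp [h2] at h1 <;> omega
  have hdfull : (Dfull M).det = (1 + Mᵀ * M).det := by
    rw [Dfull, Matrix.det_fromBlocks_one₁₁]
    congr 1
    simp [sub_eq_add_neg]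
  have hcomm : (1 + M * Mᵀ).det = (1 + Mᵀ * M).det := Matrix.det_one_add_mul_comm M Mᵀ
  have hmain : Q.det * (1 + Mᵀ * M).det = (1 + Mᵀ * M).det * Y.det := by
    have h := congrArg Matrix.det hB
    rw [Matrix.det_mul, Matrix.det_transpose, hdfull, Matrix.det_fromBlocks_zero₁₂,
      Matrix.det_transpose, hcomm] at h
    exact h
  have hdne : (1 + Mᵀ * M).det ≠ 0 := by
    have hcast : ((1 + Mᵀ * M).det : ℝ) = ((1 + Mᵀ * M).map (Int.cast : ℤ → ℝ)).det :=
      RingHom.map_det (Int.castRingHom ℝ) _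
    have hmap : ((1 + Mᵀ * M).map (Int.cast : ℤ → ℝ)) =
        1 + (M.map (Int.cast : ℤ → ℝ))ᴴ * (M.map (Int.cast : ℤ → ℝ)) := by
      ext i j
      simp [Matrix.mul_apply, Matrix.one_apply, Matrix.conjTranspose_apply,
        apply_ite (Int.cast : ℤ → ℝ)]
    have hpd : (1 + (M.map (Int.cast : ℤ → ℝ))ᴴ * (M.map (Int.cast : ℤ → ℝ))).PosDef :=
      Matrix.PosDef.add_posSemidef Matrix.PosDef.one
        (Matrix.posSemidef_conjTranspose_mul_self _)
    have : ((1 + Mᵀ * M).det : ℝ) ≠ 0 := by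
      rw [hcast, hmap]
      exact hpd.det_pos.ne'
    exact_mod_cast this
  have : Q.det = Y.det := mul_left_cancel₀ hdne (by linarith [hmain])
  omega
end

section
/- The non-convex tile T(D) = ∪_{B ∈ B(D)} P(B) has n-dimensional Lebesgue measure equal to Σ_{B ∈ B(D)} m(B)², which equals |det(𝐃)|. -/
open Matrix MeasureTheory
open scoped ENNReal

namespace Stmt12Aux

open Matrix Finset Equiv


variable {R : Type*} [CommRing R] {k N : ℕ}

noncomputable def minorProd (A : Matrix (Fin k) (Fin N) R) (B : Matrix (Fin N) (Fin k) R)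
    (S : Finset (Fin N)) : R :=
  if h : S.card = k then
    (A.submatrix id (fun i => S.orderIsoOfFin h i)).det *
      (B.submatrix (fun i => S.orderIsoOfFin h i) id).det
  else 0

lemma card_image_univ_of_inj {p : Fin k → Fin N} (hp : Function.Injective p) :
    (Finset.image p Finset.univ).card = k := by
  rw [Finset.card_image_of_injective _ hp, Finset.card_univ, Fintype.card_fin]

noncomputable def permOf (p : Fin k → Fin N) (hp : Function.Injective p) : Perm (Fin k) :=
  Equiv.ofBijective
    (fun i => ((Finset.image p Finset.univ).orderIsoOfFin (card_image_univ_of_inj hp)).symm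
      ⟨p i, by simp⟩)
    (by
      rw [← Finite.injective_iff_bijective]
      intro a b hab
      apply hp
      have := congrArg
        (fun z => (((Finset.image p Finset.univ).orderIsoOfFin (card_image_univ_of_inj hp)) z
          : Fin N)) hab
      simpa using this)

lemma permOf_spec (p : Fin k → Fin N) (hp : Function.Injective p) (i : Fin k) :
    ((Finset.image p Finset.univ).orderIsoOfFin (card_image_univ_of_inj hp)
      (permOf p hp i) : Fin N) = p i := by
  simp [permOf, Equiv.ofBijective]

lemma oio_coe_injective {S : Finset (Fin N)} {h : S.card = k} :
    Function.Injective (fun j => (S.orderIsoOfFin h j : Fin N)) := by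
  intro a b hab
  exact (S.orderIsoOfFin h).injective (Subtype.ext hab)

lemma oio_congr {S T : Finset (Fin N)} (hST : S = T) {hS : S.card = k} {hT : T.card = k}
    {i : Fin k} : (S.orderIsoOfFin hS i : Fin N) = (T.orderIsoOfFin hT i : Fin N) := by
  subst hST; rfl

theorem cb_step1 (A : Matrix (Fin k) (Fin N) R) (B : Matrix (Fin N) (Fin k) R) :
    (A * B).det = ∑ p : Fin k → Fin N, (A.submatrix id p).det * ∏ i, B (p i) i := by
  rw [Matrix.det_apply']
  simp only [Matrix.mul_apply, Finset.prod_univ_sum, Finset.mul_sum, Fintype.piFinset_univ]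
  rw [Finset.sum_comm]
  refine Finset.sum_congr rfl fun p _ => ?_
  rw [Matrix.det_apply', Finset.sum_mul]
  refine Finset.sum_congr rfl fun σ _ => ?_
  rw [Finset.prod_mul_distrib]
  simp only [Matrix.submatrix_apply, id_eq]
  ring

theorem cauchy_binet (A : Matrix (Fin k) (Fin N) R) (B : Matrix (Fin N) (Fin k) R) :
    (A * B).det = ∑ S ∈ Finset.powersetCard k (Finset.univ : Finset (Fin N)),
      minorProd A B S := by
  classical
  set F : (Fin k → Fin N) → R := fun p => (A.submatrix id p).det * ∏ i, B (p i) i with hF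
  set g : Finset (Fin N) × Perm (Fin k) → R := fun x =>
    if h : x.1.card = k then F (fun i => x.1.orderIsoOfFin h (x.2 i)) else 0 with hg
  have step2 : (A * B).det = ∑ p ∈ univ.filter (fun p => Function.Injective p), F p := by
    rw [cb_step1]
    symm
    apply Finset.sum_subset (Finset.filter_subset _ _)
    intro p _ hp
    have hinj : ¬ Function.Injective p := by simpa using hp
    rw [Function.Injective] at hinj
    push_neg at hinj
    obtain ⟨i, j, hpij, hij⟩ := hinj
    have : (A.submatrix id p).det = 0 := by
      apply Matrix.det_zero_of_column_eq hij
      intro l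
      simp [Matrix.submatrix_apply, hpij]
    rw [hF]; simp [this]
  rw [step2]
  have step3 : ∑ p ∈ univ.filter (fun p => Function.Injective p), F p
      = ∑ x ∈ (Finset.powersetCard k (Finset.univ : Finset (Fin N))) ×ˢ
          (univ : Finset (Perm (Fin k))), g x := by
    refine Finset.sum_bij'
      (i := fun p hp => (⟨Finset.image p Finset.univ,
        permOf p (by simpa using (Finset.mem_filter.mp hp).2)⟩ :
          Finset (Fin N) × Perm (Fin k)))
      (j := fun x hx => fun i =>
        x.1.orderIsoOfFin (Finset.mem_powersetCard.mp (Finset.mem_product.mp hx).1).2 (x.2 i))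
      ?_ ?_ ?_ ?_ ?_
    · -- i maps into product
      intro p hp
      have hpinj : Function.Injective p := by simpa using (Finset.mem_filter.mp hp).2
      refine Finset.mem_product.mpr ⟨?_, Finset.mem_univ _⟩
      exact Finset.mem_powersetCard.mpr ⟨Finset.subset_univ _, card_image_univ_of_inj hpinj⟩
    · -- j maps into filter
      intro x hx
      simp only [Finset.mem_filter, Finset.mem_univ, true_and]
      intro a b hab
      exact x.2.injective ((x.1.orderIsoOfFin _).injective (Subtype.ext hab))
    · -- left inverse
      intro p hp
      funext i
      exact permOf_spec p (by simpa using (Finset.mem_filter.mp hp).2) i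
    · -- right inverse
      intro x hx
      have hcard := (Finset.mem_powersetCard.mp (Finset.mem_product.mp hx).1).2
      have himg : Finset.image (fun i => (x.1.orderIsoOfFin hcard (x.2 i) : Fin N))
          Finset.univ = x.1 := by
        apply Finset.eq_of_subset_of_card_le
        · intro j hj
          simp only [Finset.mem_image] at hj
          obtain ⟨i, _, rfl⟩ := hj
          exact (x.1.orderIsoOfFin hcard (x.2 i)).2
        · rw [hcard, Finset.card_image_of_injective]
          · simp
          · intro a b hab
            exact x.2.injective ((x.1.orderIsoOfFin _).injective (Subtype.ext hab))

      have hq : Function.Injective (fun i => (x.1.orderIsoOfFin hcard (x.2 i) : Fin N)) := by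
        intro a b hab
        exact x.2.injective ((x.1.orderIsoOfFin _).injective (Subtype.ext hab))
      refine Prod.ext himg ?_
      apply Equiv.ext
      intro i
      refine oio_coe_injective (S := Finset.image
        (fun i => (x.1.orderIsoOfFin hcard (x.2 i) : Fin N)) Finset.univ)
        (h := card_image_univ_of_inj hq) ?_
      show ((Finset.image (fun i => (x.1.orderIsoOfFin hcard (x.2 i) : Fin N))
        Finset.univ).orderIsoOfFin (card_image_univ_of_inj hq) _ : Fin N) = _
      rw [permOf_spec _ hq i]
      exact (oio_congr himg).symm
    · -- values
      intro p hp
      have hpinj : Function.Injective p := by simpa using (Finset.mem_filter.mp hp).2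
      simp only [hg]
      rw [dif_pos (card_image_univ_of_inj hpinj)]
      congr 1
      funext i
      exact (permOf_spec p hpinj i).symm
  rw [step3, Finset.sum_product]
  refine Finset.sum_congr rfl fun S hS => ?_
  have hcard := (Finset.mem_powersetCard.mp hS).2
  rw [minorProd, dif_pos hcard]
  simp only [hg, dif_pos hcard, hF]
  rw [Matrix.det_apply' (B.submatrix (fun i => (S.orderIsoOfFin hcard i : Fin N)) id),
    Finset.mul_sum]
  refine Finset.sum_congr rfl fun σ _ => ?_
  have hsub : (A.submatrix id (fun i => (S.orderIsoOfFin hcard (σ i) : Fin N)))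
      = (A.submatrix id (fun i => (S.orderIsoOfFin hcard i : Fin N))).submatrix id σ := rfl
  rw [hsub, Matrix.det_permute']
  simp only [Matrix.submatrix_apply, id_eq]
  ring


variable {r m : ℕ} (M : Matrix (Fin r) (Fin m) ℤ)

lemma det_Dfull : (Dfull M).det = (1 + M * Mᵀ).det := by
  rw [Dfull, Matrix.det_fromBlocks_one₁₁, Matrix.neg_mul, sub_neg_eq_add,
    Matrix.det_one_add_mul_comm]

lemma Dmat_mul_transpose : Dmat M * (Dmat M)ᵀ = 1 + M * Mᵀ := by
  rw [Dmat, transpose_fromCols, fromCols_mul_fromRows, transpose_one, Matrix.one_mul]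

lemma Dmat_mul_Dhat_transpose : Dmat M * (Dhat M)ᵀ = 0 := by
  rw [Dmat, Dhat, transpose_fromCols, fromCols_mul_fromRows]
  simp

lemma det_Dfull_eq_sum :
    (Dfull M).det = ∑ S ∈ Finset.powersetCard r (Finset.univ : Finset (Fin (r + m))),
      minorProd ((Dmat M).submatrix id finSumFinEquiv.symm)
        (((Dmat M).submatrix id finSumFinEquiv.symm)ᵀ) S := by
  rw [← cauchy_binet]
  have : ((Dmat M).submatrix id finSumFinEquiv.symm)ᵀ
      = ((Dmat M)ᵀ).submatrix finSumFinEquiv.symm id := by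
    rw [Matrix.transpose_submatrix]
  rw [this]
  have := Matrix.submatrix_mul_equiv (Dmat M) ((Dmat M)ᵀ) id
    (finSumFinEquiv.symm : Fin (r + m) ≃ (Fin r ⊕ Fin m)) id
  rw [this, Matrix.submatrix_id_id, Dmat_mul_transpose, det_Dfull]

lemma card_image_finSumFinEquiv (B : Finset (Fin r ⊕ Fin m)) :
    (B.image finSumFinEquiv).card = B.card :=
  Finset.card_image_of_injective _ finSumFinEquiv.injective

lemma sum_mult_sq_int :
    ((∑ B ∈ Finset.powersetCard r (Finset.univ : Finset (Fin r ⊕ Fin m)),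
      (mult M B) ^ 2 : ℕ) : ℤ) = (Dfull M).det := by
  rw [det_Dfull_eq_sum, Nat.cast_sum]
  refine Finset.sum_nbij' (i := fun B => B.image finSumFinEquiv)
    (j := fun S => S.image finSumFinEquiv.symm) ?_ ?_ ?_ ?_ ?_
  · intro B hB
    obtain ⟨-, hcard⟩ := Finset.mem_powersetCard.mp hB
    exact Finset.mem_powersetCard.mpr ⟨Finset.subset_univ _,
      by rw [card_image_finSumFinEquiv, hcard]⟩
  · intro S hS
    obtain ⟨-, hcard⟩ := Finset.mem_powersetCard.mp hS
    exact Finset.mem_powersetCard.mpr ⟨Finset.subset_univ _,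
      by rw [Finset.card_image_of_injective _ finSumFinEquiv.symm.injective, hcard]⟩
  · intro B hB
    simp [Finset.image_image]
  · intro S hS
    simp [Finset.image_image]
  · intro B hB
    obtain ⟨-, hcard⟩ := Finset.mem_powersetCard.mp hB
    have h : (B.image finSumFinEquiv).card = r := by rw [card_image_finSumFinEquiv, hcard]
    rw [mult, dif_pos h, minorProd, dif_pos (by rwa [card_image_finSumFinEquiv])]
    have e1 : ((Dmat M).submatrix id finSumFinEquiv.symm).submatrix id
        (fun i => ((B.image finSumFinEquiv).orderIsoOfFin
          (by rwa [card_image_finSumFinEquiv]) i : Fin (r + m)))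
        = (Dmat M).submatrix id (colEnum B h) := rfl
    have e2 : (((Dmat M).submatrix id finSumFinEquiv.symm)ᵀ).submatrix
        (fun i => ((B.image finSumFinEquiv).orderIsoOfFin
          (by rwa [card_image_finSumFinEquiv]) i : Fin (r + m))) id
        = ((Dmat M).submatrix id (colEnum B h))ᵀ := rfl
    rw [e1, e2, Matrix.det_transpose]
    push_cast
    rw [← sq, sq_abs]

lemma part2 :
    ∑ B ∈ Finset.powersetCard r (Finset.univ : Finset (Fin r ⊕ Fin m)),
      (mult M B) ^ 2 = (Dfull M).det.natAbs := by
  rw [← sum_mult_sq_int M, Int.natAbs_natCast]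


section Measure

open Set

variable {r m : ℕ}

/-- order-respecting enumeration of a finset of `Fin r ⊕ Fin m`. -/
noncomputable def enumOf {k : ℕ} (S : Finset (Fin r ⊕ Fin m))
    (h : (S.image finSumFinEquiv).card = k) : Fin k → Fin r ⊕ Fin m :=
  fun i => finSumFinEquiv.symm ((S.image finSumFinEquiv).orderIsoOfFin h i)

lemma colEnum_eq_enumOf (B : Finset (Fin r ⊕ Fin m)) (h : (B.image finSumFinEquiv).card = r) :
    colEnum B h = enumOf B h := rfl

lemma enumOf_injective {k : ℕ} (S : Finset (Fin r ⊕ Fin m))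
    (h : (S.image finSumFinEquiv).card = k) : Function.Injective (enumOf S h) := by
  intro a b hab
  exact (S.image finSumFinEquiv).orderIsoOfFin h |>.injective
    (finSumFinEquiv.symm.injective hab |> Subtype.ext_iff.mpr |> fun hh => by
      exact Subtype.ext (by
        have := congrArg finSumFinEquiv hab
        simpa [enumOf] using this))

lemma enumOf_mem {k : ℕ} (S : Finset (Fin r ⊕ Fin m))
    (h : (S.image finSumFinEquiv).card = k) (i : Fin k) : enumOf S h i ∈ S := by
  have h2 := ((S.image finSumFinEquiv).orderIsoOfFin h i).2
  rw [Finset.mem_image] at h2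
  obtain ⟨a, ha, hae⟩ := h2
  have : finSumFinEquiv.symm ((S.image finSumFinEquiv).orderIsoOfFin h i : Fin (r + m)) = a := by
    rw [← hae]; simp
  rw [enumOf, this]; exact ha

lemma enumOf_image {k : ℕ} (S : Finset (Fin r ⊕ Fin m))
    (h : (S.image finSumFinEquiv).card = k) :
    Finset.image (enumOf S h) Finset.univ = S := by
  apply Finset.eq_of_subset_of_card_le
  · intro j hj
    rw [Finset.mem_image] at hj
    obtain ⟨i, _, rfl⟩ := hj
    exact enumOf_mem S h i
  · rw [Finset.card_image_of_injective _ (enumOf_injective S h), Finset.card_univ,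
      Fintype.card_fin]
    calc S.card = (S.image finSumFinEquiv).card :=
          (Finset.card_image_of_injective _ finSumFinEquiv.injective).symm
      _ = k := h
      _ ≤ k := le_rfl

/-- a parallelepiped-type set as an image of a cube. -/
lemma pp_eq_image {ι : Type*} [Fintype ι] [DecidableEq ι] {k : ℕ} (v : ι → Fin k → ℝ)
    (S : Finset ι) (e : Fin k → ι) (hinj : Function.Injective e)
    (he : Finset.image e Finset.univ = S) (P : ℝ → Prop) :
    {x | ∃ a : ι → ℝ, (∀ i ∈ S, P (a i)) ∧ x = ∑ i ∈ S, a i • v i}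
      = (fun t : Fin k → ℝ => ∑ i, t i • v (e i)) '' {t | ∀ i, P (t i)} := by
  have hsum : ∀ (a : ι → ℝ), ∑ i ∈ S, a i • v i = ∑ i : Fin k, a (e i) • v (e i) := by
    intro a
    rw [← he, Finset.sum_image (fun x _ y _ hxy => hinj hxy)]
  ext x
  constructor
  · rintro ⟨a, ha, rfl⟩
    refine ⟨fun i => a (e i), fun i => ha _ (by
      rw [← he]; exact Finset.mem_image_of_mem _ (Finset.mem_univ i)), ?_⟩
    rw [hsum]
  · rintro ⟨t, ht, rfl⟩
    classical
    refine ⟨fun j => if hj : ∃ i, e i = j then t hj.choose else 0, ?_, ?_⟩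
    · intro j hj
      have hex : ∃ i, e i = j := by
        rw [← he, Finset.mem_image] at hj
        obtain ⟨i, _, hi⟩ := hj
        exact ⟨i, hi⟩
      show P (if hj : ∃ i, e i = j then t hj.choose else 0)
      rw [dif_pos hex]
      exact ht _
    · rw [hsum]
      apply Finset.sum_congr rfl
      intro i _
      have hex : ∃ i', e i' = e i := ⟨i, rfl⟩
      rw [dif_pos hex, hinj hex.choose_spec]

lemma map_eq_toLin {k : ℕ} (w : Fin k → Fin k → ℝ) :
    (fun t : Fin k → ℝ => ∑ i, t i • w i)
      = Matrix.toLin' (Matrix.of fun x i => w i x) := by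
  funext t
  rw [Matrix.toLin'_apply]
  funext x
  rw [Matrix.mulVec, dotProduct]
  simp only [Finset.sum_apply, Pi.smul_apply, smul_eq_mul, Matrix.of_apply]
  exact Finset.sum_congr rfl fun i _ => mul_comm _ _

lemma volume_image_cube {k : ℕ} (w : Fin k → Fin k → ℝ) {C : Set (Fin k → ℝ)}
    (hC : volume C = 1) :
    volume ((fun t : Fin k → ℝ => ∑ i, t i • w i) '' C)
      = ENNReal.ofReal |(Matrix.of fun x i => w i x).det| := by
  rw [map_eq_toLin]
  rw [MeasureTheory.Measure.addHaar_image_linearMap, LinearMap.det_toLin', hC, mul_one]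

lemma volume_closed_cube {k : ℕ} :
    volume {t : Fin k → ℝ | ∀ i, 0 ≤ t i ∧ t i ≤ 1} = 1 := by
  have : {t : Fin k → ℝ | ∀ i, 0 ≤ t i ∧ t i ≤ 1}
      = Set.pi Set.univ (fun _ => Set.Icc (0:ℝ) 1) := by
    ext t; simp [Set.mem_pi, Set.mem_Icc, Pi.le_def, forall_and]
  rw [this, MeasureTheory.volume_pi_pi]
  simp

lemma volume_open_cube {k : ℕ} :
    volume {t : Fin k → ℝ | ∀ i, 0 < t i ∧ t i < 1} = 1 := by
  have : {t : Fin k → ℝ | ∀ i, 0 < t i ∧ t i < 1}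
      = Set.pi Set.univ (fun _ => Set.Ioo (0:ℝ) 1) := by
    ext t; simp [Set.mem_pi, Set.mem_Ioo, Pi.lt_def, forall_and]
  rw [this, MeasureTheory.volume_pi_pi]
  simp

end Measure


section PP

variable {r m : ℕ} (M : Matrix (Fin r) (Fin m) ℤ)

lemma det_cast_natAbs {k : ℕ} (X : Matrix (Fin k) (Fin k) ℤ) :
    ENNReal.ofReal |(X.map (Int.cast : ℤ → ℝ)).det| = (X.det.natAbs : ℝ≥0∞) := by
  rw [show (X.map (Int.cast : ℤ → ℝ)).det = ((X.det : ℤ) : ℝ) from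
    (RingHom.map_det (Int.castRingHom ℝ) X).symm]
  rw [← Int.cast_abs, ← Nat.cast_natAbs, ENNReal.ofReal_natCast]

lemma vol_PP1_c (B : Finset (Fin r ⊕ Fin m)) (h : (B.image finSumFinEquiv).card = r) :
    volume (PPc (colD M) B) = (mult M B : ℝ≥0∞) := by
  have heq : PPc (colD M) B = (fun t : Fin r → ℝ => ∑ i, t i • colD M (enumOf B h i)) ''
      {t | ∀ i, 0 ≤ t i ∧ t i ≤ 1} :=
    pp_eq_image (P := fun y => 0 ≤ y ∧ y ≤ 1) (colD M) B (enumOf B h)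
      (enumOf_injective B h) (enumOf_image B h)
  rw [heq, volume_image_cube _ volume_closed_cube]
  have hm : (Matrix.of fun x i => colD M (enumOf B h i) x)
      = ((Dmat M).submatrix id (colEnum B h)).map (Int.cast : ℤ → ℝ) := rfl
  rw [hm, det_cast_natAbs, mult, dif_pos h]

lemma vol_PP1_o (B : Finset (Fin r ⊕ Fin m)) (h : (B.image finSumFinEquiv).card = r) :
    volume (PPo (colD M) B) = (mult M B : ℝ≥0∞) := by
  have heq : PPo (colD M) B = (fun t : Fin r → ℝ => ∑ i, t i • colD M (enumOf B h i)) ''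
      {t | ∀ i, 0 < t i ∧ t i < 1} :=
    pp_eq_image (P := fun y => 0 < y ∧ y < 1) (colD M) B (enumOf B h)
      (enumOf_injective B h) (enumOf_image B h)
  rw [heq, volume_image_cube _ volume_open_cube]
  have hm : (Matrix.of fun x i => colD M (enumOf B h i) x)
      = ((Dmat M).submatrix id (colEnum B h)).map (Int.cast : ℤ → ℝ) := rfl
  rw [hm, det_cast_natAbs, mult, dif_pos h]

lemma row_Dfull_inl (i : Fin r) : Dfull M (Sum.inl i) = Dmat M i := by
  funext j; cases j <;> rfl

lemma row_Dfull_inr (a : Fin m) : Dfull M (Sum.inr a) = Dhat M a := by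
  funext j; cases j <;> rfl

lemma det_one_add_ne_zero : ((1 : Matrix (Fin r) (Fin r) ℤ) + M * Mᵀ).det ≠ 0 := by
  have hcast : ((((1 : Matrix (Fin r) (Fin r) ℤ) + M * Mᵀ).det : ℤ) : ℝ)
      = ((1 : Matrix (Fin r) (Fin r) ℝ)
          + (M.map (Int.cast : ℤ → ℝ)) * (M.map (Int.cast : ℤ → ℝ))ᵀ).det := by
    have hmap : ((1 : Matrix (Fin r) (Fin r) ℝ)
        + (M.map (Int.cast : ℤ → ℝ)) * (M.map (Int.cast : ℤ → ℝ))ᵀ)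
        = ((1 : Matrix (Fin r) (Fin r) ℤ) + M * Mᵀ).map ⇑(Int.castRingHom ℝ) := by
      ext i j
      simp only [Matrix.add_apply, Matrix.map_apply, Matrix.mul_apply, Matrix.one_apply,
        Matrix.transpose_apply, eq_intCast, apply_ite (Int.cast : ℤ → ℝ)]
      push_cast
      ring
    rw [hmap, ← RingHom.mapMatrix_apply, ← RingHom.map_det]
    rfl
  have posdef : ((1 : Matrix (Fin r) (Fin r) ℝ)
      + (M.map (Int.cast : ℤ → ℝ)) * (M.map (Int.cast : ℤ → ℝ))ᵀ).PosDef := by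
    apply Matrix.PosDef.add_posSemidef Matrix.PosDef.one
    have := Matrix.posSemidef_self_mul_conjTranspose (M.map (Int.cast : ℤ → ℝ))
    rwa [Matrix.conjTranspose_eq_transpose_of_trivial] at this
  intro h0
  have := posdef.det_pos
  rw [← hcast, h0] at this
  simp at this

lemma det_dual (B : Finset (Fin r ⊕ Fin m)) (hB : B.card = r)
    (h1 : (B.image finSumFinEquiv).card = r) (h2 : (Bᶜ.image finSumFinEquiv).card = m) :
    ((Dhat M).submatrix id (enumOf Bᶜ h2)).det.natAbs = mult M B := by
  classical
  set e1 := enumOf B h1 with he1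
  set e2 := enumOf Bᶜ h2 with he2
  have he1B : ∀ i, e1 i ∈ B := enumOf_mem B h1
  have he2B : ∀ a, e2 a ∈ Bᶜ := enumOf_mem Bᶜ h2
  set F : Matrix (Fin r ⊕ Fin m) (Fin r ⊕ Fin m) ℤ :=
    Matrix.of (fun i j => Sum.elim (fun a => Dmat M a j)
      (fun a => if e2 a = j then 1 else 0) i) with hFdef
  have hτbij : Function.Bijective (Sum.elim e1 e2) := by
    rw [← Finite.injective_iff_bijective]
    intro x y hxy
    match x, y with
    | Sum.inl a, Sum.inl b =>
      simp only [Sum.elim_inl] at hxy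
      rw [enumOf_injective B h1 hxy]
    | Sum.inl a, Sum.inr b =>
      simp only [Sum.elim_inl, Sum.elim_inr] at hxy
      exfalso
      have h3 : e2 b ∈ B := by rw [← hxy]; exact he1B a
      exact (Finset.mem_compl.mp (he2B b)) h3
    | Sum.inr a, Sum.inl b =>
      simp only [Sum.elim_inl, Sum.elim_inr] at hxy
      exfalso
      have h3 : e2 a ∈ B := by rw [hxy]; exact he1B b
      exact (Finset.mem_compl.mp (he2B a)) h3
    | Sum.inr a, Sum.inr b =>
      simp only [Sum.elim_inr] at hxy
      rw [enumOf_injective Bᶜ h2 hxy]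
  set τ : Equiv.Perm (Fin r ⊕ Fin m) := Equiv.ofBijective _ hτbij with hτ
  have hτl : ∀ i, τ (Sum.inl i) = e1 i := fun i => rfl
  have hτr : ∀ a, τ (Sum.inr a) = e2 a := fun a => rfl
  have hFsub : F.submatrix id ⇑τ = Matrix.fromBlocks
      ((Dmat M).submatrix id e1) ((Dmat M).submatrix id e2) 0 1 := by
    ext i j
    match i, j with
    | Sum.inl a, Sum.inl b => rfl
    | Sum.inl a, Sum.inr b => rfl
    | Sum.inr a, Sum.inl b =>
      show (if e2 a = e1 b then (1:ℤ) else 0) = 0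
      rw [if_neg]
      intro hh
      exact (Finset.mem_compl.mp (he2B a)) (hh ▸ he1B b)
    | Sum.inr a, Sum.inr b =>
      show (if e2 a = e2 b then (1:ℤ) else 0) = (1 : Matrix (Fin m) (Fin m) ℤ) a b
      rw [Matrix.one_apply]
      by_cases hab : a = b
      · subst hab; simp
      · rw [if_neg (fun hh => hab (enumOf_injective Bᶜ h2 hh)), if_neg hab]
  have h1det : F.det.natAbs = mult M B := by
    have hp := Matrix.det_permute' τ F
    rw [hFsub, Matrix.det_fromBlocks_zero₂₁, Matrix.det_one, mul_one] at hp
    have : ((Dmat M).submatrix id e1).det.natAbs = F.det.natAbs := by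
      rw [hp, Int.natAbs_mul]
      simp [Int.units_natAbs]
    rw [← this, mult, dif_pos h1]
    rfl
  have hprod : F * (Dfull M)ᵀ = Matrix.fromBlocks ((1 : Matrix (Fin r) (Fin r) ℤ) + M * Mᵀ) 0
      (((Dmat M).submatrix id e2)ᵀ) (((Dhat M).submatrix id e2)ᵀ) := by
    ext i j
    match i, j with
    | Sum.inl a, Sum.inl b =>
      show ∑ j, Dmat M a j * (Dfull M) (Sum.inl b) j = _
      simp only [row_Dfull_inl]
      exact congrFun (congrFun (Dmat_mul_transpose M) a) b
    | Sum.inl a, Sum.inr b =>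
      show ∑ j, Dmat M a j * (Dfull M) (Sum.inr b) j = _
      simp only [row_Dfull_inr]
      have := congrFun (congrFun (Dmat_mul_Dhat_transpose M) a) b
      simpa [Matrix.mul_apply] using this
    | Sum.inr a, Sum.inl b =>
      show ∑ j, (if e2 a = j then (1:ℤ) else 0) * (Dfull M) (Sum.inl b) j = _
      simp only [ite_mul, one_mul, zero_mul, Finset.sum_ite_eq, Finset.mem_univ, if_true]
      simp [row_Dfull_inl]
    | Sum.inr a, Sum.inr b =>
      show ∑ j, (if e2 a = j then (1:ℤ) else 0) * (Dfull M) (Sum.inr b) j = _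
      simp only [ite_mul, one_mul, zero_mul, Finset.sum_ite_eq, Finset.mem_univ, if_true]
      simp [row_Dfull_inr]
  have hdet2 : F.det * (Dfull M).det
      = ((1 : Matrix (Fin r) (Fin r) ℤ) + M * Mᵀ).det * ((Dhat M).submatrix id e2).det := by
    have hcd := congrArg Matrix.det hprod
    rw [Matrix.det_mul, Matrix.det_transpose, Matrix.det_fromBlocks_zero₁₂,
      Matrix.det_transpose] at hcd
    exact hcd
  have hF : F.det = ((Dhat M).submatrix id e2).det := by
    apply mul_left_cancel₀ (det_one_add_ne_zero M)
    rw [← hdet2, det_Dfull]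
    ring
  rw [← h1det, hF]

lemma vol_PP2_c (B : Finset (Fin r ⊕ Fin m)) (hB : B.card = r)
    (h2 : (Bᶜ.image finSumFinEquiv).card = m) :
    volume (PPc (colDhat M) Bᶜ) = (mult M B : ℝ≥0∞) := by
  have heq : PPc (colDhat M) Bᶜ
      = (fun t : Fin m → ℝ => ∑ i, t i • colDhat M (enumOf Bᶜ h2 i)) ''
        {t | ∀ i, 0 ≤ t i ∧ t i ≤ 1} :=
    pp_eq_image (P := fun y => 0 ≤ y ∧ y ≤ 1) (colDhat M) Bᶜ (enumOf Bᶜ h2)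
      (enumOf_injective Bᶜ h2) (enumOf_image Bᶜ h2)
  rw [heq, volume_image_cube _ volume_closed_cube]
  have hm : (Matrix.of fun x i => colDhat M (enumOf Bᶜ h2 i) x)
      = ((Dhat M).submatrix id (enumOf Bᶜ h2)).map (Int.cast : ℤ → ℝ) := rfl
  rw [hm, det_cast_natAbs, det_dual M B hB (by rw [card_image_finSumFinEquiv, hB]) h2]

lemma vol_PP2_o (B : Finset (Fin r ⊕ Fin m)) (hB : B.card = r)
    (h2 : (Bᶜ.image finSumFinEquiv).card = m) :
    volume (PPo (colDhat M) Bᶜ) = (mult M B : ℝ≥0∞) := by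
  have heq : PPo (colDhat M) Bᶜ
      = (fun t : Fin m → ℝ => ∑ i, t i • colDhat M (enumOf Bᶜ h2 i)) ''
        {t | ∀ i, 0 < t i ∧ t i < 1} :=
    pp_eq_image (P := fun y => 0 < y ∧ y < 1) (colDhat M) Bᶜ (enumOf Bᶜ h2)
      (enumOf_injective Bᶜ h2) (enumOf_image Bᶜ h2)
  rw [heq, volume_image_cube _ volume_open_cube]
  have hm : (Matrix.of fun x i => colDhat M (enumOf Bᶜ h2 i) x)
      = ((Dhat M).submatrix id (enumOf Bᶜ h2)).map (Int.cast : ℤ → ℝ) := rfl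
  rw [hm, det_cast_natAbs, det_dual M B hB (by rw [card_image_finSumFinEquiv, hB]) h2]

end PP


section Assemble

variable {r m : ℕ} (M : Matrix (Fin r) (Fin m) ℤ)

lemma card_image_of_card (B : Finset (Fin r ⊕ Fin m)) (hB : B.card = r) :
    (B.image finSumFinEquiv).card = r := by
  rw [card_image_finSumFinEquiv, hB]

lemma card_image_compl_of_card (B : Finset (Fin r ⊕ Fin m)) (hB : B.card = r) :
    (Bᶜ.image finSumFinEquiv).card = m := by
  rw [card_image_finSumFinEquiv, Finset.card_compl, hB]
  simp [Fintype.card_sum]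

lemma measurable_comp_inl : Measurable (fun x : (Fin r ⊕ Fin m) → ℝ => x ∘ Sum.inl) :=
  measurable_pi_lambda _ fun a => measurable_pi_apply _

lemma measurable_comp_inr : Measurable (fun x : (Fin r ⊕ Fin m) → ℝ => x ∘ Sum.inr) :=
  measurable_pi_lambda _ fun a => measurable_pi_apply _

lemma volume_split (S₁ : Set (Fin r → ℝ)) (S₂ : Set (Fin m → ℝ))
    (h₁ : MeasurableSet S₁) (h₂ : MeasurableSet S₂) :
    volume {x : (Fin r ⊕ Fin m) → ℝ | (x ∘ Sum.inl) ∈ S₁ ∧ (x ∘ Sum.inr) ∈ S₂}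
      = volume S₁ * volume S₂ := by
  have hmp := MeasureTheory.volume_measurePreserving_sumPiEquivProdPi_symm
    (fun _ : Fin r ⊕ Fin m => ℝ)
  have hms : MeasurableSet {x : (Fin r ⊕ Fin m) → ℝ | (x ∘ Sum.inl) ∈ S₁ ∧ (x ∘ Sum.inr) ∈ S₂} := by
    exact (measurable_comp_inl h₁).inter (measurable_comp_inr h₂)
  have hpre : (MeasurableEquiv.sumPiEquivProdPi (fun _ : Fin r ⊕ Fin m => ℝ)).symm ⁻¹'
      {x : (Fin r ⊕ Fin m) → ℝ | (x ∘ Sum.inl) ∈ S₁ ∧ (x ∘ Sum.inr) ∈ S₂} = S₁ ×ˢ S₂ := by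
    ext y
    constructor
    · intro hy
      exact ⟨hy.1, hy.2⟩
    · intro hy
      exact ⟨hy.1, hy.2⟩
  have := hmp.measure_preimage hms.nullMeasurableSet
  rw [hpre] at this
  rw [← this, MeasureTheory.Measure.volume_eq_prod, MeasureTheory.Measure.prod_prod]

lemma isCompact_image_cube {k : ℕ} (w : Fin k → Fin k → ℝ) :
    IsCompact ((fun t : Fin k → ℝ => ∑ i, t i • w i) '' {t | ∀ i, 0 ≤ t i ∧ t i ≤ 1}) := by
  have hC : IsCompact {t : Fin k → ℝ | ∀ i, 0 ≤ t i ∧ t i ≤ 1} := by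
    rw [show {t : Fin k → ℝ | ∀ i, 0 ≤ t i ∧ t i ≤ 1}
        = Set.pi Set.univ (fun _ => Set.Icc (0:ℝ) 1) from by
      ext t; simp [Set.mem_pi, Set.mem_Icc, Pi.le_def, forall_and]]
    exact isCompact_univ_pi fun _ => isCompact_Icc
  apply hC.image
  rw [map_eq_toLin]
  exact LinearMap.continuous_of_finiteDimensional
    (Matrix.toLin' (Matrix.of fun x i => w i x))

lemma isOpen_image_cube {k : ℕ} (w : Fin k → Fin k → ℝ)
    (hdet : (Matrix.of fun x i => w i x).det ≠ 0) :
    IsOpen ((fun t : Fin k → ℝ => ∑ i, t i • w i) '' {t | ∀ i, 0 < t i ∧ t i < 1}) := by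
  have hO : IsOpen {t : Fin k → ℝ | ∀ i, 0 < t i ∧ t i < 1} := by
    rw [show {t : Fin k → ℝ | ∀ i, 0 < t i ∧ t i < 1}
        = Set.pi Set.univ (fun _ => Set.Ioo (0:ℝ) 1) from by
      ext t; simp [Set.mem_pi, Set.mem_Ioo, forall_and]]
    exact isOpen_set_pi Set.finite_univ fun _ _ => isOpen_Ioo
  rw [map_eq_toLin]
  set f := Matrix.toLin' (Matrix.of fun x i => w i x) with hf
  have hdf : LinearMap.det f ≠ 0 := by rw [hf, LinearMap.det_toLin']; exact hdet
  have hcoe : ⇑f = ⇑((f.equivOfDetNeZero hdf).toContinuousLinearEquiv.toHomeomorph) := rfl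
  rw [hcoe]
  exact (f.equivOfDetNeZero hdf).toContinuousLinearEquiv.toHomeomorph.isOpenMap _ hO

lemma mult_ne_zero_det₁ (B : Finset (Fin r ⊕ Fin m)) (h1 : (B.image finSumFinEquiv).card = r)
    (hne : mult M B ≠ 0) :
    (Matrix.of fun x i => colD M (enumOf B h1 i) x).det ≠ 0 := by
  have hm : (Matrix.of fun x i => colD M (enumOf B h1 i) x)
      = ((Dmat M).submatrix id (colEnum B h1)).map (Int.cast : ℤ → ℝ) := rfl
  rw [hm, show (((Dmat M).submatrix id (colEnum B h1)).map (Int.cast : ℤ → ℝ)).det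
    = (((Dmat M).submatrix id (colEnum B h1)).det : ℝ) from
      (RingHom.map_det (Int.castRingHom ℝ) _).symm]
  rw [mult, dif_pos h1] at hne
  intro hc
  apply hne
  rwa [Int.cast_eq_zero, ← Int.natAbs_eq_zero] at hc

lemma mult_ne_zero_det₂ (B : Finset (Fin r ⊕ Fin m)) (hB : B.card = r)
    (h2 : (Bᶜ.image finSumFinEquiv).card = m) (hne : mult M B ≠ 0) :
    (Matrix.of fun x i => colDhat M (enumOf Bᶜ h2 i) x).det ≠ 0 := by
  have hm : (Matrix.of fun x i => colDhat M (enumOf Bᶜ h2 i) x)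
      = ((Dhat M).submatrix id (enumOf Bᶜ h2)).map (Int.cast : ℤ → ℝ) := rfl
  rw [hm, show (((Dhat M).submatrix id (enumOf Bᶜ h2)).map (Int.cast : ℤ → ℝ)).det
    = (((Dhat M).submatrix id (enumOf Bᶜ h2)).det : ℝ) from
      (RingHom.map_det (Int.castRingHom ℝ) _).symm]
  intro hc
  apply hne
  rw [← det_dual M B hB (card_image_of_card B hB) h2]
  rwa [Int.cast_eq_zero, ← Int.natAbs_eq_zero] at hc

lemma vol_Pclosed (B : Finset (Fin r ⊕ Fin m)) (hB : B.card = r) :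
    volume (Pclosed M B) = (mult M B : ℝ≥0∞) ^ 2 := by
  have h1 := card_image_of_card B hB
  have h2 := card_image_compl_of_card B hB
  have e1 : PPc (colD M) B = (fun t : Fin r → ℝ => ∑ i, t i • colD M (enumOf B h1 i)) ''
      {t | ∀ i, 0 ≤ t i ∧ t i ≤ 1} :=
    pp_eq_image (P := fun y => 0 ≤ y ∧ y ≤ 1) (colD M) B (enumOf B h1)
      (enumOf_injective B h1) (enumOf_image B h1)
  have e2 : PPc (colDhat M) Bᶜ
      = (fun t : Fin m → ℝ => ∑ i, t i • colDhat M (enumOf Bᶜ h2 i)) ''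
        {t | ∀ i, 0 ≤ t i ∧ t i ≤ 1} :=
    pp_eq_image (P := fun y => 0 ≤ y ∧ y ≤ 1) (colDhat M) Bᶜ (enumOf Bᶜ h2)
      (enumOf_injective Bᶜ h2) (enumOf_image Bᶜ h2)
  have hm₁ : MeasurableSet (PPc (colD M) B) := by
    rw [e1]; exact (isCompact_image_cube _).isClosed.measurableSet
  have hm₂ : MeasurableSet (PPc (colDhat M) Bᶜ) := by
    rw [e2]; exact (isCompact_image_cube _).isClosed.measurableSet
  have : Pclosed M B = {x : (Fin r ⊕ Fin m) → ℝ |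
      (x ∘ Sum.inl) ∈ PPc (colD M) B ∧ (x ∘ Sum.inr) ∈ PPc (colDhat M) Bᶜ} := rfl
  rw [this, volume_split _ _ hm₁ hm₂, vol_PP1_c M B h1, vol_PP2_c M B hB h2, sq]

lemma isOpen_Popen (B : Finset (Fin r ⊕ Fin m)) (hB : B.card = r) (hne : mult M B ≠ 0) :
    IsOpen (Popen M B) := by
  have h1 := card_image_of_card B hB
  have h2 := card_image_compl_of_card B hB
  have e1 : PPo (colD M) B = (fun t : Fin r → ℝ => ∑ i, t i • colD M (enumOf B h1 i)) ''
      {t | ∀ i, 0 < t i ∧ t i < 1} :=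
    pp_eq_image (P := fun y => 0 < y ∧ y < 1) (colD M) B (enumOf B h1)
      (enumOf_injective B h1) (enumOf_image B h1)
  have e2 : PPo (colDhat M) Bᶜ
      = (fun t : Fin m → ℝ => ∑ i, t i • colDhat M (enumOf Bᶜ h2 i)) ''
        {t | ∀ i, 0 < t i ∧ t i < 1} :=
    pp_eq_image (P := fun y => 0 < y ∧ y < 1) (colDhat M) Bᶜ (enumOf Bᶜ h2)
      (enumOf_injective Bᶜ h2) (enumOf_image Bᶜ h2)
  have hO₁ : IsOpen (PPo (colD M) B) := by
    rw [e1]; exact isOpen_image_cube _ (mult_ne_zero_det₁ M B h1 hne)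
  have hO₂ : IsOpen (PPo (colDhat M) Bᶜ) := by
    rw [e2]; exact isOpen_image_cube _ (mult_ne_zero_det₂ M B hB h2 hne)
  have : Popen M B = (fun x : (Fin r ⊕ Fin m) → ℝ => x ∘ Sum.inl) ⁻¹' (PPo (colD M) B)
      ∩ (fun x : (Fin r ⊕ Fin m) → ℝ => x ∘ Sum.inr) ⁻¹' (PPo (colDhat M) Bᶜ) := rfl
  rw [this]
  have hcl : Continuous (fun x : (Fin r ⊕ Fin m) → ℝ => x ∘ Sum.inl) :=
    continuous_pi fun a => continuous_apply _
  have hcr : Continuous (fun x : (Fin r ⊕ Fin m) → ℝ => x ∘ Sum.inr) :=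
    continuous_pi fun a => continuous_apply _
  exact (hO₁.preimage hcl).inter (hO₂.preimage hcr)

lemma vol_Popen (B : Finset (Fin r ⊕ Fin m)) (hB : B.card = r) (hne : mult M B ≠ 0) :
    volume (Popen M B) = (mult M B : ℝ≥0∞) ^ 2 := by
  have h1 := card_image_of_card B hB
  have h2 := card_image_compl_of_card B hB
  have e1 : PPo (colD M) B = (fun t : Fin r → ℝ => ∑ i, t i • colD M (enumOf B h1 i)) ''
      {t | ∀ i, 0 < t i ∧ t i < 1} :=
    pp_eq_image (P := fun y => 0 < y ∧ y < 1) (colD M) B (enumOf B h1)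
      (enumOf_injective B h1) (enumOf_image B h1)
  have e2 : PPo (colDhat M) Bᶜ
      = (fun t : Fin m → ℝ => ∑ i, t i • colDhat M (enumOf Bᶜ h2 i)) ''
        {t | ∀ i, 0 < t i ∧ t i < 1} :=
    pp_eq_image (P := fun y => 0 < y ∧ y < 1) (colDhat M) Bᶜ (enumOf Bᶜ h2)
      (enumOf_injective Bᶜ h2) (enumOf_image Bᶜ h2)
  have hm₁ : MeasurableSet (PPo (colD M) B) := by
    rw [e1]; exact (isOpen_image_cube _ (mult_ne_zero_det₁ M B h1 hne)).measurableSet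
  have hm₂ : MeasurableSet (PPo (colDhat M) Bᶜ) := by
    rw [e2]; exact (isOpen_image_cube _ (mult_ne_zero_det₂ M B hB h2 hne)).measurableSet
  have hsp : Popen M B = {x : (Fin r ⊕ Fin m) → ℝ |
      (x ∘ Sum.inl) ∈ PPo (colD M) B ∧ (x ∘ Sum.inr) ∈ PPo (colDhat M) Bᶜ} := rfl
  rw [hsp, volume_split _ _ hm₁ hm₂, vol_PP1_o M B h1, vol_PP2_o M B hB h2, sq]

lemma popen_disjoint (B B' : Finset (Fin r ⊕ Fin m)) (hB : B.card = r) (hB' : B'.card = r)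
    (hne : B ≠ B') : Disjoint (Popen M B) (Popen M B') := by
  classical
  rw [Set.disjoint_left]
  rintro x ⟨hx1, hx2⟩ ⟨hx1', hx2'⟩
  obtain ⟨a, ha, hxa⟩ := hx1
  obtain ⟨b, hb, hxb⟩ := hx2
  obtain ⟨a', ha', hxa'⟩ := hx1'
  obtain ⟨b', hb', hxb'⟩ := hx2'
  set u : (Fin r ⊕ Fin m) → ℝ :=
    fun j => (if j ∈ B then a j else 0) - (if j ∈ B' then a' j else 0) with hu
  set v : (Fin r ⊕ Fin m) → ℝ :=
    fun j => (if j ∈ Bᶜ then b j else 0) - (if j ∈ B'ᶜ then b' j else 0) with hv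
  have h1 : ∑ j, u j • colD M j = 0 := by
    simp only [hu, sub_smul, ite_smul, zero_smul]
    rw [Finset.sum_sub_distrib, Finset.sum_ite_mem, Finset.sum_ite_mem,
      Finset.univ_inter, Finset.univ_inter, ← hxa, ← hxa', sub_self]
  have h2 : ∑ j, v j • colDhat M j = 0 := by
    simp only [hv, sub_smul, ite_smul, zero_smul]
    rw [Finset.sum_sub_distrib, Finset.sum_ite_mem, Finset.sum_ite_mem,
      Finset.univ_inter, Finset.univ_inter, ← hxb, ← hxb', sub_self]
  have h3 : ∀ i : Fin r, u (Sum.inl i) + ∑ aa : Fin m, u (Sum.inr aa) * (M i aa : ℝ) = 0 := by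
    intro i
    have := congrFun h1 i
    rw [Finset.sum_apply] at this
    simp only [Pi.smul_apply, smul_eq_mul, Pi.zero_apply] at this
    rw [Fintype.sum_sum_type] at this
    have hl : ∀ i' : Fin r, colD M (Sum.inl i') i = if i' = i then 1 else 0 := by
      intro i'
      show ((Dmat M i (Sum.inl i') : ℤ) : ℝ) = _
      show (((1 : Matrix (Fin r) (Fin r) ℤ) i i' : ℤ) : ℝ) = _
      rw [Matrix.one_apply]
      by_cases h : i = i'
      · subst h; simp
      · rw [if_neg h, if_neg (Ne.symm h)]; simp
    have hr : ∀ aa : Fin m, colD M (Sum.inr aa) i = (M i aa : ℝ) := fun _ => rfl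
    simp only [hl, hr, mul_ite, mul_one, mul_zero] at this
    rw [Finset.sum_ite_eq' Finset.univ i (fun i' => u (Sum.inl i'))] at this
    simpa using this
  have h4 : ∀ aa : Fin m, v (Sum.inr aa) = ∑ i : Fin r, v (Sum.inl i) * (M i aa : ℝ) := by
    intro aa
    have := congrFun h2 aa
    rw [Finset.sum_apply] at this
    simp only [Pi.smul_apply, smul_eq_mul, Pi.zero_apply] at this
    rw [Fintype.sum_sum_type] at this
    have hl : ∀ i : Fin r, colDhat M (Sum.inl i) aa = -(M i aa : ℝ) := by
      intro i
      show ((Dhat M aa (Sum.inl i) : ℤ) : ℝ) = _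
      show (((-Mᵀ : Matrix (Fin m) (Fin r) ℤ) aa i : ℤ) : ℝ) = _
      simp [Matrix.transpose_apply]
    have hr : ∀ bb : Fin m, colDhat M (Sum.inr bb) aa = if bb = aa then 1 else 0 := by
      intro bb
      show (((1 : Matrix (Fin m) (Fin m) ℤ) aa bb : ℤ) : ℝ) = _
      rw [Matrix.one_apply]
      by_cases h : aa = bb
      · subst h; simp
      · rw [if_neg h, if_neg (Ne.symm h)]; simp
    simp only [hl, hr, mul_ite, mul_one, mul_zero] at this
    rw [Finset.sum_ite_eq' Finset.univ aa (fun bb => v (Sum.inr bb))] at this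
    simp only [Finset.mem_univ, if_true] at this
    have hsum : ∑ i : Fin r, v (Sum.inl i) * -(M i aa : ℝ)
        = -∑ i : Fin r, v (Sum.inl i) * (M i aa : ℝ) := by
      rw [← Finset.sum_neg_distrib]
      exact Finset.sum_congr rfl fun i _ => by ring
    rw [hsum] at this
    linarith
  have h5 : ∑ j, u j * v j = 0 := by
    rw [Fintype.sum_sum_type]
    have : ∀ aa : Fin m, u (Sum.inr aa) * v (Sum.inr aa)
        = ∑ i : Fin r, v (Sum.inl i) * (u (Sum.inr aa) * (M i aa : ℝ)) := by
      intro aa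
      rw [h4 aa, Finset.mul_sum]
      exact Finset.sum_congr rfl fun i _ => by ring
    simp only [this]
    rw [Finset.sum_comm]
    have hcollect : ∀ i : Fin r, u (Sum.inl i) * v (Sum.inl i)
        + ∑ aa : Fin m, v (Sum.inl i) * (u (Sum.inr aa) * (M i aa : ℝ))
        = v (Sum.inl i) * (u (Sum.inl i) + ∑ aa : Fin m, u (Sum.inr aa) * (M i aa : ℝ)) := by
      intro i
      rw [mul_add, Finset.mul_sum, mul_comm (u (Sum.inl i)) (v (Sum.inl i))]
    rw [← Finset.sum_add_distrib]
    calc ∑ i : Fin r, (u (Sum.inl i) * v (Sum.inl i)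
          + ∑ aa : Fin m, v (Sum.inl i) * (u (Sum.inr aa) * (M i aa : ℝ)))
        = ∑ i : Fin r, v (Sum.inl i)
            * (u (Sum.inl i) + ∑ aa : Fin m, u (Sum.inr aa) * (M i aa : ℝ)) :=
          Finset.sum_congr rfl fun i _ => hcollect i
      _ = 0 := by
          apply Finset.sum_eq_zero
          intro i _
          rw [h3 i, mul_zero]
  -- sign analysis
  have hterm : ∀ j, u j * v j ≤ 0 := by
    intro j
    by_cases hjB : j ∈ B <;> by_cases hjB' : j ∈ B'
    · have : v j = 0 := by
        simp [hv, Finset.mem_compl, hjB, hjB']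
      rw [this, mul_zero]
    · have hvj : v j = -(b' j) := by
        simp [hv, Finset.mem_compl, hjB, hjB']
      have huj : u j = a j := by simp [hu, hjB, hjB']
      have hb'j : 0 < b' j := (hb' j (Finset.mem_compl.mpr hjB')).1
      have haj : 0 < a j := (ha j hjB).1
      rw [huj, hvj]
      nlinarith
    · have hvj : v j = b j := by
        simp [hv, Finset.mem_compl, hjB, hjB']
      have huj : u j = -(a' j) := by simp [hu, hjB, hjB']
      have hbj : 0 < b j := (hb j (Finset.mem_compl.mpr hjB)).1
      have ha'j : 0 < a' j := (ha' j hjB').1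
      rw [huj, hvj]
      nlinarith
    · have huj : u j = 0 := by simp [hu, hjB, hjB']
      rw [huj, zero_mul]
  have hstrict : ∃ j₀, u j₀ * v j₀ < 0 := by
    have hnsub : ¬ B ⊆ B' := by
      intro hsub
      exact hne (Finset.eq_of_subset_of_card_le hsub (by rw [hB, hB']))
    obtain ⟨j₀, hj₀B, hj₀B'⟩ := Finset.not_subset.mp hnsub
    refine ⟨j₀, ?_⟩
    have hvj : v j₀ = -(b' j₀) := by
      simp [hv, Finset.mem_compl, hj₀B, hj₀B']
    have huj : u j₀ = a j₀ := by simp [hu, hj₀B, hj₀B']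
    have hb'j : 0 < b' j₀ := (hb' j₀ (Finset.mem_compl.mpr hj₀B')).1
    have haj : 0 < a j₀ := (ha j₀ hj₀B).1
    rw [huj, hvj]
    nlinarith
  obtain ⟨j₀, hj₀⟩ := hstrict
  have : ∑ j, u j * v j < 0 := by
    calc ∑ j, u j * v j ≤ ∑ j ∈ Finset.univ.erase j₀, u j * v j + u j₀ * v j₀ := by
          rw [Finset.sum_erase_add _ _ (Finset.mem_univ j₀)]
      _ < 0 := by
          have h6 : ∑ j ∈ Finset.univ.erase j₀, u j * v j ≤ 0 :=
            Finset.sum_nonpos fun j _ => hterm j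
          linarith
  rw [h5] at this
  exact lt_irrefl 0 this

end Assemble
end Stmt12Aux

/-- the tile `T(D)` has Lebesgue measure `Σ_B m(B)²`, which equals
`|det 𝐃|`. -/
theorem stmt12 {r m : ℕ} (M : Matrix (Fin r) (Fin m) ℤ) :
    volume (Tile M) =
      ∑ B ∈ Finset.powersetCard r (Finset.univ : Finset (Fin r ⊕ Fin m)),
        (mult M B : ℝ≥0∞) ^ 2 ∧
    ∑ B ∈ Finset.powersetCard r (Finset.univ : Finset (Fin r ⊕ Fin m)),
        (mult M B) ^ 2 = (Dfull M).det.natAbs := by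
  classical
  constructor
  · -- the volume computation
    set s := Finset.powersetCard r (Finset.univ : Finset (Fin r ⊕ Fin m)) with hs
    apply le_antisymm
    · -- upper bound
      have hsub : Tile M ⊆ ⋃ B ∈ s, Pclosed M B := by
        intro x hx
        simp only [Tile, Set.mem_iUnion, Set.mem_setOf_eq] at hx
        obtain ⟨B, hB, hxB⟩ := hx
        have hBs : B ∈ s := Finset.mem_powersetCard.mpr ⟨Finset.subset_univ _, hB.1⟩
        exact Set.mem_biUnion hBs hxB
      calc volume (Tile M) ≤ volume (⋃ B ∈ s, Pclosed M B) := measure_mono hsub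
        _ ≤ ∑ B ∈ s, volume (Pclosed M B) := measure_biUnion_finset_le s _
        _ = ∑ B ∈ s, (mult M B : ℝ≥0∞) ^ 2 := Finset.sum_congr rfl fun B hB =>
            Stmt12Aux.vol_Pclosed M B (Finset.mem_powersetCard.mp hB).2
    · -- lower bound
      set t := s.filter (fun B => mult M B ≠ 0) with ht
      have hcard : ∀ B ∈ t, B.card = r := fun B hB =>
        (Finset.mem_powersetCard.mp (Finset.mem_filter.mp hB).1).2
      have hmult : ∀ B ∈ t, mult M B ≠ 0 := fun B hB => (Finset.mem_filter.mp hB).2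
      have hsum : ∑ B ∈ s, (mult M B : ℝ≥0∞) ^ 2 = ∑ B ∈ t, (mult M B : ℝ≥0∞) ^ 2 := by
        rw [ht]
        symm
        apply Finset.sum_filter_of_ne
        intro B _ hFB h0
        apply hFB
        rw [h0]
        simp
      rw [hsum]
      have hdisj : (↑t : Set (Finset (Fin r ⊕ Fin m))).PairwiseDisjoint (Popen M) := by
        intro B hB B' hB' hne
        exact Stmt12Aux.popen_disjoint M B B' (hcard B hB) (hcard B' hB') hne
      have hmeas : ∀ B ∈ t, MeasurableSet (Popen M B) := fun B hB =>
        (Stmt12Aux.isOpen_Popen M B (hcard B hB) (hmult B hB)).measurableSet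
      calc ∑ B ∈ t, (mult M B : ℝ≥0∞) ^ 2 = ∑ B ∈ t, volume (Popen M B) :=
            Finset.sum_congr rfl fun B hB =>
              (Stmt12Aux.vol_Popen M B (hcard B hB) (hmult B hB)).symm
        _ = volume (⋃ B ∈ t, Popen M B) := (measure_biUnion_finset hdisj hmeas).symm
        _ ≤ volume (Tile M) := by
            apply measure_mono
            intro x hx
            simp only [Set.mem_iUnion] at hx
            obtain ⟨B, hBt, hxB⟩ := hx
            have hbasis : IsBasis M B := ⟨hcard B hBt, hmult B hBt⟩
            have hsubc : Popen M B ⊆ Pclosed M B := by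
              rintro y ⟨⟨a, ha, hya⟩, ⟨b, hb, hyb⟩⟩
              exact ⟨⟨a, fun i hi => ⟨(ha i hi).1.le, (ha i hi).2.le⟩, hya⟩,
                     ⟨b, fun i hi => ⟨(hb i hi).1.le, (hb i hi).2.le⟩, hyb⟩⟩
            exact Set.mem_biUnion hbasis (hsubc hxB)
  · exact Stmt12Aux.part2 M
end

section
/- Let w ∈ R^r be a vector not contained in the R-span of any (r−1)-subset of the columns of D restricted to a basis B, and write w = Σ bᵢ c_{kᵢ} in the basis {c_{k₁},…,c_{k_r}} of columns of D indexed by B. Then a point v ∈ R^r satisfies v + εw ∈ Π•(D|_B) for all sufficiently small ε > 0 if and only if, writing v = Σ aᵢ c_{kᵢ}, one has aᵢ ∈ [0,1) when bᵢ > 0 and aᵢ ∈ (0,1] when bᵢ < 0. -/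
open Matrix MeasureTheory
open scoped ENNReal

/-- with `c` the real columns of `D` indexed by a basis via `g`,
`w = Σ bᵢ cᵢ` not in the span of any `(r-1)`-subset of these columns, and
`v = Σ aᵢ cᵢ`, one has `v + εw ∈ Π•(D|_B)` for all sufficiently small `ε > 0` iff
`aᵢ ∈ [0,1)` when `bᵢ > 0` and `aᵢ ∈ (0,1]` when `bᵢ < 0`. -/
theorem stmt14 (r n : ℕ) (D : Matrix (Fin r) (Fin n) ℤ)
    (g : Fin r → Fin n) (hg : Function.Injective g)
    (hdet : (D.submatrix id g).det ≠ 0)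
    (c : Fin r → Fin r → ℝ) (hc : c = fun i a => (D a (g i) : ℝ))
    (b : Fin r → ℝ) (w : Fin r → ℝ) (hw : w = ∑ i, b i • c i)
    (hspan : ∀ S : Finset (Fin r), S.card = r - 1 →
      w ∉ Submodule.span ℝ (c '' ↑S))
    (a : Fin r → ℝ) (v : Fin r → ℝ) (hv : v = ∑ i, a i • c i) :
    (∃ ε₀ > (0 : ℝ), ∀ ε : ℝ, 0 < ε → ε < ε₀ →
        v + ε • w ∈ {x : Fin r → ℝ |
          ∃ t : Fin r → ℝ, (∀ i, 0 ≤ t i ∧ t i ≤ 1) ∧ x = ∑ i, t i • c i}) ↔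
      ∀ i, (0 < b i → 0 ≤ a i ∧ a i < 1) ∧ (b i < 0 → 0 < a i ∧ a i ≤ 1) := by
  
  -- the real matrix with columns c
  set A : Matrix (Fin r) (Fin r) ℝ := fun x i => c i x with hA
  have hAdet : A.det ≠ 0 := by
    have hmap : A = (Int.castRingHom ℝ).mapMatrix (D.submatrix id g) := by
      ext x i; simp [hA, hc, Matrix.submatrix]
    rw [hmap, ← RingHom.map_det]
    simp only [eq_intCast]
    exact_mod_cast hdet
  -- uniqueness of coefficients
  have huniq : ∀ t s : Fin r → ℝ, ∑ i, t i • c i = ∑ i, s i • c i → t = s := by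
    intro t s h
    have hinj : Function.Injective A.mulVec :=
      Matrix.mulVec_injective_iff_isUnit.2
        ((Matrix.isUnit_iff_isUnit_det A).2 (isUnit_iff_ne_zero.2 hAdet))
    apply hinj
    ext x
    have := congrFun h x
    simpa [Matrix.mulVec, dotProduct, hA, mul_comm] using this
  -- all b i ≠ 0
  have hb : ∀ i, b i ≠ 0 := by
    intro i hbi
    apply hspan (Finset.univ.erase i) (by simp [Finset.card_erase_of_mem])
    rw [hw, ← Finset.sum_erase_add _ _ (Finset.mem_univ i), hbi, zero_smul, add_zero]
    exact Submodule.sum_mem _ fun j hj => Submodule.smul_mem _ _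
      (Submodule.subset_span ⟨j, by simpa using hj, rfl⟩)
  constructor
  · rintro ⟨ε₀, hε₀, h⟩ i
    have key : ∀ ε : ℝ, 0 < ε → ε < ε₀ → 0 ≤ a i + ε * b i ∧ a i + ε * b i ≤ 1 := by
      intro ε h1 h2
      obtain ⟨t, ht, heq⟩ := h ε h1 h2
      have heqt : (fun j => a j + ε * b j) = t := by
        apply huniq
        rw [← heq, hv, hw, Finset.smul_sum, ← Finset.sum_add_distrib]
        exact Finset.sum_congr rfl fun j _ => by rw [add_smul, smul_smul]
      rw [← heqt] at ht
      simpa using ht i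
    constructor
    · intro hbi
      constructor
      · by_contra hai
        push_neg at hai
        set ε := min (ε₀/2) (-a i / (2 * b i)) with hε
        have hε1 : 0 < ε := lt_min (by linarith) (div_pos (by linarith) (by linarith))
        have hε2 : ε < ε₀ := lt_of_le_of_lt (min_le_left _ _) (by linarith)
        have hk := (key ε hε1 hε2).1
        have hub : ε * b i ≤ -a i / 2 := by
          calc ε * b i ≤ (-a i / (2 * b i)) * b i :=
                mul_le_mul_of_nonneg_right (min_le_right _ _) hbi.le
            _ = -a i / 2 := by field_simp
        linarith
      · obtain ⟨ε, h1, h2⟩ := exists_between (lt_min hε₀ (one_div_pos.2 hbi))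
        have hk := (key ε h1 (h2.trans_le (min_le_left _ _))).2
        have h3 : ε < 1 / b i := h2.trans_le (min_le_right _ _)
        nlinarith
    · intro hbi
      constructor
      · obtain ⟨ε, h1, h2⟩ := exists_between (lt_min hε₀ (one_div_pos.2 (by linarith : (0:ℝ) < -b i)))
        have hk := (key ε h1 (h2.trans_le (min_le_left _ _))).1
        have h3 : ε < 1 / (-b i) := h2.trans_le (min_le_right _ _)
        nlinarith
      · by_contra hai
        push_neg at hai
        have hb' : 0 < -b i := by linarith
        set ε := min (ε₀/2) ((a i - 1) / (2 * (-b i))) with hε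
        have hε1 : 0 < ε := lt_min (by linarith) (div_pos (by linarith) (by linarith))
        have hε2 : ε < ε₀ := lt_of_le_of_lt (min_le_left _ _) (by linarith)
        have hk := (key ε hε1 hε2).2
        have hub : ε * (-b i) ≤ (a i - 1) / 2 := by
          calc ε * (-b i) ≤ ((a i - 1) / (2 * (-b i))) * (-b i) :=
                mul_le_mul_of_nonneg_right (min_le_right _ _) hb'.le
            _ = (a i - 1) / 2 := by field_simp [hb i]
        linarith
  · intro h
    rcases isEmpty_or_nonempty (Fin r) with hr | hr
    · exact ⟨1, one_pos, fun ε h1 h2 => ⟨fun _ => 0, fun i => isEmptyElim i, by simp [hv, hw]⟩⟩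
    · set f : Fin r → ℝ := fun i => if 0 < b i then (1 - a i) / b i else a i / (-b i) with hf
      set ε₀ := Finset.univ.inf' Finset.univ_nonempty f with hε₀def
      have hpos : 0 < ε₀ := by
        rw [hε₀def, Finset.lt_inf'_iff]
        intro i _
        rw [hf]
        dsimp only
        split_ifs with hbi
        · exact div_pos (by linarith [((h i).1 hbi).2]) hbi
        · have hbi' : b i < 0 := lt_of_le_of_ne (not_lt.1 hbi) (hb i)
          exact div_pos (((h i).2 hbi').1) (by linarith)
      refine ⟨ε₀, hpos, fun ε h1 h2 => ⟨fun i => a i + ε * b i, ?_, ?_⟩⟩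
      · intro i
        have hle : ε < f i := lt_of_lt_of_le h2 (Finset.inf'_le _ (Finset.mem_univ i))
        rw [hf] at hle
        dsimp only at hle
        split_ifs at hle with hbi
        · have h3 := (h i).1 hbi
          have h4 : ε * b i < 1 - a i := (lt_div_iff₀ hbi).1 hle
          refine ⟨?_, ?_⟩ <;> show _ ≤ _
          · show (0:ℝ) ≤ a i + ε * b i; nlinarith [h3.1]
          · show a i + ε * b i ≤ 1; linarith
        · have hbi' : b i < 0 := lt_of_le_of_ne (not_lt.1 hbi) (hb i)
          have h3 := (h i).2 hbi'
          have h4 : ε * (-b i) < a i := (lt_div_iff₀ (by linarith)).1 hle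
          refine ⟨?_, ?_⟩ <;> show _ ≤ _
          · show (0:ℝ) ≤ a i + ε * b i; linarith
          · show a i + ε * b i ≤ 1; nlinarith [h3.2]
      · rw [hv, hw, Finset.smul_sum, ← Finset.sum_add_distrib]
        exact Finset.sum_congr rfl fun j _ => by rw [add_smul, smul_smul]
end
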